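/- arXiv:1608.08989 — 8 statements merged into one kernel-verified Lean document; each statement's English description precedes it below -/
import Mathlib

section
/- For all 1 ≤ s₁ < s₂ ≤ j with j+1 ≤ n one has the determinantal identity D⁻(m+1,…,⟨m+s₁⟩,…,m+j) · D⁻(m+1,…,⟨m+s₂⟩,…,m+j+1) − D⁻(m+1,…,⟨m+s₂⟩,…,m+j) · D⁻(m+1,…,⟨m+s₁⟩,…,m+j+1) = D⁻(m+1,…,m+j) · D⁻(m+1,…,⟨m+s₁⟩,…,⟨m+s₂⟩,…,m+j+1). -/
noncomputable section

/-- `Dminus c m l` : the determinant `D⁻(l)` of the matrix with rows `m+1,…,m+l.length`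
and columns given by the list `l`, whose `(u,v)`-entry is `c (m+u) (l.get v)`. -/
def Dminus {R : Type*} [CommRing R] (c : ℕ → ℕ → R) (m : ℕ) (l : List ℕ) : R :=
  (Matrix.of fun u v : Fin l.length => c (m + u.1 + 1) (l.get v)).det

open Matrix
section
set_option linter.unusedSectionVars false
variable {R : Type*} [CommRing R]

lemma fin_val_succAbove {k : ℕ} (p : Fin (k+1)) (i : Fin k) :
    (p.succAbove i).val = if i.val < p.val then i.val else i.val + 1 := by
  rw [Fin.succAbove]
  split_ifs with h1 h2 h2
  · rfl
  · exact absurd (by exact_mod_cast h1) h2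
  · exact absurd (by exact_mod_cast h2 : Fin.castSucc i < p) h1
  · rfl

lemma erase_range' (a s n : ℕ) (h1 : a ≤ s) (h2 : s < a + n) :
    (List.range' a n).erase s = List.range' a (s-a) ++ List.range' (s+1) (a+n-s-1) := by
  have key : List.range' a (s-a) ++ List.range' (a+(s-a)) ((a+n-s-1)+1) = List.range' a n := by
    rw [List.range'_append_1]; congr 1; omega
  have e1 : a + (s-a) = s := by omega
  rw [e1, List.range'_succ] at key
  rw [← key, List.erase_append_right, List.erase_cons_head]
  simp only [List.mem_range']
  omega

lemma Dminus_eq_det {c : ℕ → ℕ → R} {m : ℕ} {l : List ℕ} {k : ℕ} (h : l.length = k)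
    (M : Matrix (Fin k) (Fin k) R)
    (hM : ∀ (u v : Fin k), M u v = c (m + u.1 + 1) (l.get ⟨v.1, by have := v.isLt; omega⟩)) :
    Dminus c m l = M.det := by
  subst h
  have : (Matrix.of fun u v : Fin l.length => c (m + u.1 + 1) (l.get v)) = M := by
    ext u v
    rw [hM u v]; rfl
  rw [Dminus, this]

lemma det_updateCol_single {k : ℕ} (A : Matrix (Fin (k+1)) (Fin (k+1)) R) (b d : Fin (k+1)) :
    det (A.updateCol d (Pi.single b 1))
      = (-1)^(b.val+d.val) * det (A.submatrix b.succAbove d.succAbove) := by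
  rw [← det_transpose, ← Matrix.updateRow_transpose, ← Matrix.adjugate_apply,
    Matrix.adjugate_fin_succ_eq_det_submatrix,
    show Aᵀ.submatrix d.succAbove b.succAbove = (A.submatrix b.succAbove d.succAbove)ᵀ from rfl,
    det_transpose, Nat.add_comm d.val b.val]

lemma det_last_row_single {k : ℕ} (M : Matrix (Fin (k+1)) (Fin (k+1)) R)
    (h : ∀ v, M (Fin.last k) v = if v = Fin.last k then 1 else 0) :
    M.det = (M.submatrix Fin.castSucc Fin.castSucc).det := by
  have hM : M = M.updateRow (Fin.last k) (Pi.single (Fin.last k) 1) := by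
    ext u v
    rw [Matrix.updateRow_apply]
    split_ifs with hu
    · subst hu; rw [h v, Pi.single_apply]
    · rfl
  conv_lhs => rw [hM, ← Matrix.adjugate_apply, Matrix.adjugate_fin_succ_eq_det_submatrix]
  rw [Fin.succAbove_last]
  have : Even ((Fin.last k).val + (Fin.last k).val) := ⟨k, rfl⟩
  rw [this.neg_one_pow, one_mul]

lemma submatrix_updateColumn' {k : ℕ} (A : Matrix (Fin (k+2)) (Fin (k+2)) R)
    (f : Fin (k+1) → Fin (k+2)) (d : Fin (k+2)) (c' : Fin (k+1)) (v : Fin (k+2) → R) :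
    (A.updateCol (d.succAbove c') v).submatrix f d.succAbove
      = (A.submatrix f d.succAbove).updateCol c' (fun r => v (f r)) := by
  ext r s
  by_cases hs : s = c' <;>
    simp [Matrix.updateCol_apply, hs, (Fin.succAbove_right_injective (p := d)).eq_iff]

lemma det_two_single {k : ℕ} (A : Matrix (Fin (k+2)) (Fin (k+2)) R)
    (a' c' : Fin (k+1)) (b d : Fin (k+2)) :
    det ((A.updateCol (d.succAbove c') (Pi.single (b.succAbove a') 1)).updateCol d
        (Pi.single b 1))
      = (-1)^(b.val+d.val+a'.val+c'.val)
        * det (A.submatrix (b.succAbove ∘ a'.succAbove) (d.succAbove ∘ c'.succAbove)) := by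
  rw [det_updateCol_single, submatrix_updateColumn']
  have hs : (fun r : Fin (k+1) => (Pi.single (b.succAbove a') (1:R) : Fin (k+2) → R) (b.succAbove r)) = (Pi.single a' 1 : Fin (k+1) → R) := by
    funext r
    simp [Pi.single_apply, (Fin.succAbove_right_injective (p := b)).eq_iff]
  rw [hs, det_updateCol_single, Matrix.submatrix_submatrix]
  ring
lemma negOnePowMulSelf (p : ℕ) : (-1:R)^p * (-1)^p = 1 := by
  rw [← pow_add]
  exact Even.neg_one_pow ⟨p, rfl⟩

lemma neg_one_pow_congr' {p q : ℕ} (h : p % 2 = q % 2) : ((-1:R))^p = (-1)^q := by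
  conv_lhs => rw [← Nat.div_add_mod p 2]
  conv_rhs => rw [← Nat.div_add_mod q 2]
  rw [pow_add, pow_add, pow_mul, pow_mul]
  norm_num [h]

lemma updateColumn_comm' {k : ℕ} (M : Matrix (Fin k) (Fin k) R) {c d : Fin k}
    (h : c ≠ d) (u v : Fin k → R) :
    (M.updateCol c u).updateCol d v = (M.updateCol d v).updateCol c u := by
  ext i j
  simp only [Matrix.updateCol_apply]
  split_ifs with h1 h2 h2
  · exact absurd (h1 ▸ h2) h.symm
  · rfl
  · rfl
  · rfl

lemma DJ_cancel {k : ℕ} (A : Matrix (Fin (k+2)) (Fin (k+2)) R) (a' c' : Fin (k+1))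
    (b d : Fin (k+2)) :
    det A * (det (A.submatrix (b.succAbove a').succAbove (d.succAbove c').succAbove)
        * det (A.submatrix b.succAbove d.succAbove)
      - det (A.submatrix (b.succAbove a').succAbove d.succAbove)
        * det (A.submatrix b.succAbove (d.succAbove c').succAbove))
    = det A * ((-1)^(a'.val + c'.val + (b.succAbove a').val + (d.succAbove c').val)
        * (det A * det (A.submatrix (b.succAbove ∘ a'.succAbove) (d.succAbove ∘ c'.succAbove)))) := by
  set a := b.succAbove a' with ha
  set cc := d.succAbove c' with hcc
  have hab : a ≠ b := Fin.succAbove_ne b a'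
  have hcd : cc ≠ d := Fin.succAbove_ne d c'
  set B := adjugate A with hB
  set C := ((1 : Matrix (Fin (k+2)) (Fin (k+2)) R).updateCol cc (fun i => B i a)).updateCol d
      (fun i => B i b) with hC
  have hCd : ∀ x, C x d = B x b := by
    intro x; rw [hC, Matrix.updateCol_apply, if_pos rfl]
  have hCc : ∀ x, C x cc = B x a := by
    intro x; rw [hC, Matrix.updateCol_apply, if_neg hcd, Matrix.updateCol_apply, if_pos rfl]
  have hCo : ∀ x jj, jj ≠ d → jj ≠ cc → C x jj = (1 : Matrix (Fin (k+2)) (Fin (k+2)) R) x jj := by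
    intro x jj h1 h2
    rw [hC, Matrix.updateCol_apply, if_neg h1, Matrix.updateCol_apply, if_neg h2]
  -- determinant of C
  have hdetC : det C = B cc a * B d b - B cc b * B d a := by
    set U : Matrix (Fin (k+2)) (Fin 2) R := Matrix.of fun i t =>
      if t = 0 then B i a - (1 : Matrix (Fin (k+2)) (Fin (k+2)) R) i cc
      else B i b - (1 : Matrix (Fin (k+2)) (Fin (k+2)) R) i d with hU
    set V : Matrix (Fin 2) (Fin (k+2)) R := Matrix.of fun t j =>
      if t = 0 then (1 : Matrix (Fin (k+2)) (Fin (k+2)) R) cc j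
      else (1 : Matrix (Fin (k+2)) (Fin (k+2)) R) d j with hV
    have hUV : ∀ i j, (U * V) i j
        = (B i a - (1 : Matrix (Fin (k+2)) (Fin (k+2)) R) i cc)
            * (1 : Matrix (Fin (k+2)) (Fin (k+2)) R) cc j
          + (B i b - (1 : Matrix (Fin (k+2)) (Fin (k+2)) R) i d)
            * (1 : Matrix (Fin (k+2)) (Fin (k+2)) R) d j := by
      intro i j
      rw [Matrix.mul_apply, Fin.sum_univ_two]
      simp [hU, hV]
    have hCUV : C = 1 + U * V := by
      ext i j
      rw [Matrix.add_apply, hUV]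
      by_cases h1 : j = d
      · rw [h1, hCd, Matrix.one_apply_ne hcd, Matrix.one_apply_eq]; ring
      · by_cases h2 : j = cc
        · rw [h2, hCc, Matrix.one_apply_ne (Ne.symm hcd), Matrix.one_apply_eq]; ring
        · rw [hCo i j h1 h2, Matrix.one_apply_ne (fun h => h2 h.symm),
            Matrix.one_apply_ne (fun h => h1 h.symm)]; ring
    rw [hCUV, Matrix.det_one_add_mul_comm]
    have hVUe : ∀ (t s' : Fin 2), (V * U) t s' = U (if t = 0 then cc else d) s' := by
      intro t s'
      rw [Matrix.mul_apply]
      by_cases ht : t = 0 <;>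
        simp [hV, ht, Matrix.one_apply, ite_mul, one_mul, zero_mul, Finset.sum_ite_eq]
    have hU0 : ∀ x, U x 0 = B x a - (1 : Matrix (Fin (k+2)) (Fin (k+2)) R) x cc := by
      intro x; rw [hU, Matrix.of_apply, if_pos rfl]
    have hU1 : ∀ x, U x 1 = B x b - (1 : Matrix (Fin (k+2)) (Fin (k+2)) R) x d := by
      intro x; rw [hU, Matrix.of_apply, if_neg (by decide : ¬((1:Fin 2) = 0))]
    rw [Matrix.det_fin_two, Matrix.add_apply, Matrix.add_apply, Matrix.add_apply, Matrix.add_apply,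
      hVUe 0 0, hVUe 0 1, hVUe 1 0, hVUe 1 1, if_pos rfl,
      if_neg (by decide : ¬((1:Fin 2) = 0)),
      hU0 cc, hU0 d, hU1 cc, hU1 d, Matrix.one_apply_eq, Matrix.one_apply_eq,
      Matrix.one_apply_ne (by decide : ((0:Fin 2)) ≠ 1), Matrix.one_apply_ne (by decide : ((1:Fin 2)) ≠ 0),
      Matrix.one_apply_eq, Matrix.one_apply_eq, Matrix.one_apply_ne hcd,
      Matrix.one_apply_ne (Ne.symm hcd)]
    ring
  -- A * C
  have key : ∀ (i j₀ : Fin (k+2)), ∑ x, A i x * B x j₀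
      = (Pi.single j₀ (det A) : Fin (k+2) → R) i := by
    intro i j₀
    have h1 : (A * B) i j₀ = (det A • (1 : Matrix (Fin (k+2)) (Fin (k+2)) R)) i j₀ := by
      rw [hB, Matrix.mul_adjugate]
    rw [Matrix.mul_apply] at h1
    rw [h1, Matrix.smul_apply, Matrix.one_apply, smul_eq_mul, Pi.single_apply]
    split_ifs <;> ring
  have hAC : A * C = (A.updateCol cc (Pi.single a (det A))).updateCol d
      (Pi.single b (det A)) := by
    ext i j
    rw [Matrix.mul_apply]
    by_cases h1 : j = d
    · rw [h1, Matrix.updateCol_apply, if_pos rfl]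
      rw [Finset.sum_congr rfl (fun x _ => by rw [hCd x])]
      exact key i b
    · by_cases h2 : j = cc
      · rw [h2, Matrix.updateCol_apply, if_neg hcd, Matrix.updateCol_apply, if_pos rfl]
        rw [Finset.sum_congr rfl (fun x _ => by rw [hCc x])]
        exact key i a
      · rw [Matrix.updateCol_apply, if_neg h1, Matrix.updateCol_apply, if_neg h2]
        rw [Finset.sum_congr rfl (fun x _ => by rw [hCo x j h1 h2])]
        simp [Matrix.one_apply, mul_ite, mul_one, mul_zero, Finset.sum_ite_eq]
  -- assemble
  have hsingle : ∀ (x : Fin (k+2)), (Pi.single x (det A) : Fin (k+2) → R)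
      = det A • (Pi.single x (1:R) : Fin (k+2) → R) := by
    intro x
    funext i
    simp only [Pi.single_apply, Pi.smul_apply, smul_eq_mul]
    split_ifs <;> simp
  have main : det A * det C = det A * det A
      * ((-1)^(b.val+d.val+a'.val+c'.val)
        * det (A.submatrix (b.succAbove ∘ a'.succAbove) (d.succAbove ∘ c'.succAbove))) := by
    have h1 : det A * det C = det (A * C) := (det_mul A C).symm
    rw [h1, hAC, hsingle, hsingle, Matrix.det_updateCol_smul,
      updateColumn_comm' _ hcd, Matrix.det_updateCol_smul, updateColumn_comm' _ (Ne.symm hcd)]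
    rw [show A.updateCol cc (Pi.single a 1) = A.updateCol (d.succAbove c')
        (Pi.single (b.succAbove a') 1) from rfl]
    rw [det_two_single]
    ring
  have hXac : det (A.submatrix a.succAbove cc.succAbove) = (-1)^(a.val+cc.val) * B cc a := by
    rw [hB, Matrix.adjugate_fin_succ_eq_det_submatrix, ← mul_assoc, negOnePowMulSelf, one_mul]
  have hXbd : det (A.submatrix b.succAbove d.succAbove) = (-1)^(b.val+d.val) * B d b := by
    rw [hB, Matrix.adjugate_fin_succ_eq_det_submatrix, ← mul_assoc, negOnePowMulSelf, one_mul]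
  have hXad : det (A.submatrix a.succAbove d.succAbove) = (-1)^(a.val+d.val) * B d a := by
    rw [hB, Matrix.adjugate_fin_succ_eq_det_submatrix, ← mul_assoc, negOnePowMulSelf, one_mul]
  have hXbc : det (A.submatrix b.succAbove cc.succAbove) = (-1)^(b.val+cc.val) * B cc b := by
    rw [hB, Matrix.adjugate_fin_succ_eq_det_submatrix, ← mul_assoc, negOnePowMulSelf, one_mul]
  rw [hdetC] at main
  rw [hXac, hXbd, hXad, hXbc]
  have hsg : (-1:R)^((a.val+b.val+cc.val+d.val)+(b.val+d.val+a'.val+c'.val))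
      = (-1)^(a'.val+c'.val+a.val+cc.val) := neg_one_pow_congr' (by omega)
  linear_combination ((-1:R)^(a.val+b.val+cc.val+d.val)) * main
    + (det A * det A
        * det (A.submatrix (b.succAbove ∘ a'.succAbove) (d.succAbove ∘ c'.succAbove))) * hsg

lemma DJ_poly {k : ℕ} (a' c' : Fin (k+1)) (b d : Fin (k+2)) :
    (Matrix.det ((Matrix.mvPolynomialX (Fin (k+2)) (Fin (k+2)) ℤ).submatrix
          (b.succAbove a').succAbove (d.succAbove c').succAbove)
        * Matrix.det ((Matrix.mvPolynomialX (Fin (k+2)) (Fin (k+2)) ℤ).submatrix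
          b.succAbove d.succAbove)
      - Matrix.det ((Matrix.mvPolynomialX (Fin (k+2)) (Fin (k+2)) ℤ).submatrix
          (b.succAbove a').succAbove d.succAbove)
        * Matrix.det ((Matrix.mvPolynomialX (Fin (k+2)) (Fin (k+2)) ℤ).submatrix
          b.succAbove (d.succAbove c').succAbove))
    = (-1)^(a'.val + c'.val + (b.succAbove a').val + (d.succAbove c').val)
        * (Matrix.det (Matrix.mvPolynomialX (Fin (k+2)) (Fin (k+2)) ℤ)
          * Matrix.det ((Matrix.mvPolynomialX (Fin (k+2)) (Fin (k+2)) ℤ).submatrix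
            (b.succAbove ∘ a'.succAbove) (d.succAbove ∘ c'.succAbove))) :=
  mul_left_cancel₀ (Matrix.det_mvPolynomialX_ne_zero (Fin (k+2)) ℤ)
    (DJ_cancel (Matrix.mvPolynomialX (Fin (k+2)) (Fin (k+2)) ℤ) a' c' b d)

lemma DJ {k : ℕ} (A : Matrix (Fin (k+2)) (Fin (k+2)) R) (a' c' : Fin (k+1)) (b d : Fin (k+2)) :
    det (A.submatrix (b.succAbove a').succAbove (d.succAbove c').succAbove)
        * det (A.submatrix b.succAbove d.succAbove)
      - det (A.submatrix (b.succAbove a').succAbove d.succAbove)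
        * det (A.submatrix b.succAbove (d.succAbove c').succAbove)
    = (-1)^(a'.val + c'.val + (b.succAbove a').val + (d.succAbove c').val)
        * (det A * det (A.submatrix (b.succAbove ∘ a'.succAbove) (d.succAbove ∘ c'.succAbove))) := by
  let φ : MvPolynomial (Fin (k+2) × Fin (k+2)) ℤ →ₐ[ℤ] R :=
    MvPolynomial.aeval (fun p : Fin (k+2) × Fin (k+2) => A p.1 p.2)
  have hA : (Matrix.mvPolynomialX (Fin (k+2)) (Fin (k+2)) ℤ).map φ = A := by
    have := Matrix.mvPolynomialX_mapMatrix_aeval (S := R) ℤ A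
    rwa [AlgHom.mapMatrix_apply] at this
  have key := congrArg (fun x => φ x) (DJ_poly a' c' b d)
  simp only [map_sub, _root_.map_mul, map_pow, map_neg, _root_.map_one, AlgHom.map_det,
    AlgHom.mapMatrix_apply, ← Matrix.submatrix_map, hA] at key
  exact key

end

set_option maxHeartbeats 1600000 in
/-- the determinantal identity
`D⁻(m+1,…,⟨m+s₁⟩,…,m+j)·D⁻(m+1,…,⟨m+s₂⟩,…,m+j+1)
  − D⁻(m+1,…,⟨m+s₂⟩,…,m+j)·D⁻(m+1,…,⟨m+s₁⟩,…,m+j+1)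
  = D⁻(m+1,…,m+j)·D⁻(m+1,…,⟨m+s₁⟩,…,⟨m+s₂⟩,…,m+j+1)`. -/
theorem statement3 {R : Type*} [CommRing R] (c : ℕ → ℕ → R) (m n j s₁ s₂ : ℕ)
    (hs₁ : 1 ≤ s₁) (h12 : s₁ < s₂) (hs₂ : s₂ ≤ j) (hj : j + 1 ≤ n) :
    Dminus c m ((List.range' (m + 1) j).erase (m + s₁)) *
        Dminus c m ((List.range' (m + 1) (j + 1)).erase (m + s₂))
      - Dminus c m ((List.range' (m + 1) j).erase (m + s₂)) *
          Dminus c m ((List.range' (m + 1) (j + 1)).erase (m + s₁))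
      = Dminus c m (List.range' (m + 1) j) *
          Dminus c m (((List.range' (m + 1) (j + 1)).erase (m + s₁)).erase (m + s₂)) := by
  obtain ⟨k, rfl⟩ : ∃ k, j = k + 2 := ⟨j - 2, by omega⟩
  set A : Matrix (Fin (k+3)) (Fin (k+3)) R := Matrix.of fun u v =>
    if u.val = k+2 then (if v.val = k+2 then (1:R) else 0) else c (m+u.val+1) (m+v.val+1)
    with hA
  have pf_a : k+1 < k+2 := by omega
  have pf_c : s₁-1 < k+2 := by omega
  have pf_b : k+2 < k+3 := by omega
  have pf_d : s₂-1 < k+3 := by omega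
  have pf_a2 : k+1 < k+3 := by omega
  have pf_c2 : s₁-1 < k+3 := by omega
  have hDJ := DJ (k := k+1) A ⟨k+1, pf_a⟩ ⟨s₁-1, pf_c⟩ ⟨k+2, pf_b⟩ ⟨s₂-1, pf_d⟩
  have ha : (⟨k+2, pf_b⟩ : Fin (k+3)).succAbove ⟨k+1, pf_a⟩ = ⟨k+1, pf_a2⟩ := by
    apply Fin.ext
    rw [fin_val_succAbove]
    simp
  have hc : (⟨s₂-1, pf_d⟩ : Fin (k+3)).succAbove ⟨s₁-1, pf_c⟩ = ⟨s₁-1, pf_c2⟩ := by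
    apply Fin.ext
    rw [fin_val_succAbove]
    have h' : s₁-1 < s₂-1 := by omega
    exact if_pos h'
  rw [ha, hc] at hDJ
  have hsgn : ((-1:R)) ^ (k+1 + (s₁-1) + (k+1) + (s₁-1)) = 1 :=
    Even.neg_one_pow ⟨k+1+(s₁-1), by omega⟩
  rw [hsgn, one_mul] at hDJ
  have E1 : Dminus c m (List.range' (m+1) (k+2)) = Matrix.det A := by
    have hlast : ∀ v, A (Fin.last (k+2)) v = if v = Fin.last (k+2) then (1:R) else 0 := by
      intro v
      simp only [hA, Matrix.of_apply, Fin.val_last, if_pos rfl]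
      simp [Fin.ext_iff]
    rw [det_last_row_single A hlast]
    apply Dminus_eq_det (by simp)
    intro u v
    have hu := u.isLt
    have hv := v.isLt
    rw [List.get_eq_getElem]
    simp only [Matrix.submatrix_apply, hA, Matrix.of_apply, Fin.coe_castSucc,
      List.getElem_range']
    rw [if_neg (by omega)]
    exact congrArg₂ c rfl (by omega)
  have E2 : Dminus c m ((List.range' (m+1) (k+2)).erase (m+s₁))
      = Matrix.det (A.submatrix (⟨k+1, pf_a2⟩ : Fin (k+3)).succAbove
          (⟨s₁-1, pf_c2⟩ : Fin (k+3)).succAbove) := by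
    have hlast : ∀ v, (A.submatrix (⟨k+1, pf_a2⟩ : Fin (k+3)).succAbove
        (⟨s₁-1, pf_c2⟩ : Fin (k+3)).succAbove) (Fin.last (k+1)) v
        = if v = Fin.last (k+1) then (1:R) else 0 := by
      intro v
      have hv := v.isLt
      simp only [Matrix.submatrix_apply, hA, Matrix.of_apply, fin_val_succAbove, Fin.val_last,
        Fin.ext_iff]
      split_ifs <;> first | rfl | (exfalso; omega)
    rw [det_last_row_single _ hlast, Matrix.submatrix_submatrix]
    rw [erase_range' (m+1) (m+s₁) (k+2) (by omega) (by omega)]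
    apply Dminus_eq_det (by simp; omega)
    intro u v
    have hu := u.isLt
    have hv := v.isLt
    rw [List.get_eq_getElem]
    simp only [Matrix.submatrix_apply, Function.comp_apply, hA, Matrix.of_apply,
      fin_val_succAbove, Fin.coe_castSucc, List.getElem_append, List.getElem_range',
      List.length_range']
    split_ifs <;> first | (exfalso; omega) | (apply congrArg₂ c (by omega) (by omega))
  have E4 : Dminus c m ((List.range' (m+1) (k+2)).erase (m+s₂))
      = Matrix.det (A.submatrix (⟨k+1, pf_a2⟩ : Fin (k+3)).succAbove
          (⟨s₂-1, pf_d⟩ : Fin (k+3)).succAbove) := by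
    have hlast : ∀ v, (A.submatrix (⟨k+1, pf_a2⟩ : Fin (k+3)).succAbove
        (⟨s₂-1, pf_d⟩ : Fin (k+3)).succAbove) (Fin.last (k+1)) v
        = if v = Fin.last (k+1) then (1:R) else 0 := by
      intro v
      have hv := v.isLt
      simp only [Matrix.submatrix_apply, hA, Matrix.of_apply, fin_val_succAbove, Fin.val_last,
        Fin.ext_iff]
      split_ifs <;> first | rfl | (exfalso; omega)
    rw [det_last_row_single _ hlast, Matrix.submatrix_submatrix]
    rw [erase_range' (m+1) (m+s₂) (k+2) (by omega) (by omega)]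
    apply Dminus_eq_det (by simp; omega)
    intro u v
    have hu := u.isLt
    have hv := v.isLt
    rw [List.get_eq_getElem]
    simp only [Matrix.submatrix_apply, Function.comp_apply, hA, Matrix.of_apply,
      fin_val_succAbove, Fin.coe_castSucc, List.getElem_append, List.getElem_range',
      List.length_range']
    split_ifs <;> first | (exfalso; omega) | (apply congrArg₂ c (by omega) (by omega))
  have E3 : Dminus c m ((List.range' (m+1) (k+2+1)).erase (m+s₂))
      = Matrix.det (A.submatrix (⟨k+2, pf_b⟩ : Fin (k+3)).succAbove
          (⟨s₂-1, pf_d⟩ : Fin (k+3)).succAbove) := by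
    rw [erase_range' (m+1) (m+s₂) (k+2+1) (by omega) (by omega)]
    apply Dminus_eq_det (by simp; omega)
    intro u v
    have hu := u.isLt
    have hv := v.isLt
    rw [List.get_eq_getElem]
    simp only [Matrix.submatrix_apply, hA, Matrix.of_apply, fin_val_succAbove,
      List.getElem_append, List.getElem_range', List.length_range']
    split_ifs <;> first | (exfalso; omega) | (apply congrArg₂ c (by omega) (by omega))
  have E5 : Dminus c m ((List.range' (m+1) (k+2+1)).erase (m+s₁))
      = Matrix.det (A.submatrix (⟨k+2, pf_b⟩ : Fin (k+3)).succAbove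
          (⟨s₁-1, pf_c2⟩ : Fin (k+3)).succAbove) := by
    rw [erase_range' (m+1) (m+s₁) (k+2+1) (by omega) (by omega)]
    apply Dminus_eq_det (by simp; omega)
    intro u v
    have hu := u.isLt
    have hv := v.isLt
    rw [List.get_eq_getElem]
    simp only [Matrix.submatrix_apply, hA, Matrix.of_apply, fin_val_succAbove,
      List.getElem_append, List.getElem_range', List.length_range']
    split_ifs <;> first | (exfalso; omega) | (apply congrArg₂ c (by omega) (by omega))
  have E6 : Dminus c m (((List.range' (m+1) (k+2+1)).erase (m+s₁)).erase (m+s₂))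
      = Matrix.det (A.submatrix
          ((⟨k+2, pf_b⟩ : Fin (k+3)).succAbove ∘ (⟨k+1, pf_a⟩ : Fin (k+1+1)).succAbove)
          ((⟨s₂-1, pf_d⟩ : Fin (k+3)).succAbove ∘ (⟨s₁-1, pf_c⟩ : Fin (k+1+1)).succAbove)) := by
    rw [erase_range' (m+1) (m+s₁) (k+2+1) (by omega) (by omega),
      List.erase_append_right _ (by simp [List.mem_range'_1]; omega),
      erase_range' (m+s₁+1) (m+s₂) _ (by omega) (by omega)]
    apply Dminus_eq_det (by simp; omega)
    intro u v
    have hu := u.isLt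
    have hv := v.isLt
    rw [List.get_eq_getElem]
    simp only [Matrix.submatrix_apply, Function.comp_apply, hA, Matrix.of_apply,
      fin_val_succAbove, List.getElem_append, List.getElem_range', List.length_range']
    split_ifs <;> first | (exfalso; omega) | (apply congrArg₂ c (by omega) (by omega))
  rw [E2, E3, E4, E5, E1, E6]
  exact hDJ
end
end

section
/- Let 2 ≤ s ≤ m and let x₁,…,x_{s−1} and a₁,…,a_s be integers from the set {1,…,m}. Then Σ_{t=1}^{s} (−1)^{s−t} D⁺(x₁,…,x_{s−1},a_t) · D⁺(a₁,…,⟨a_t⟩,…,a_s) = D⁺(x₁,…,x_{s−1}) · D⁺(a₁,…,a_s). -/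
noncomputable section

/-- `Dplus c l` : the determinant `D⁺(l)` of the matrix with rows `1,…,l.length` and
columns given by the list `l`, whose `(u,t)`-entry is `c u (l.get t)`. -/
def Dplus {R : Type*} [CommRing R] (c : ℕ → ℕ → R) (l : List ℕ) : R :=
  (Matrix.of fun u t : Fin l.length => c (u.1 + 1) (l.get t)).det

lemma Dplus_eq_det {R : Type*} [CommRing R] (c : ℕ → ℕ → R) {k : ℕ} (l : List ℕ)
    (hl : l.length = k) (v : Fin k → ℕ)
    (hv : ∀ i : Fin l.length, l.get i = v (Fin.cast hl i)) :
    Dplus c l = (Matrix.of fun u t : Fin k => c (u.1 + 1) (v t)).det := by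
  subst hl
  unfold Dplus
  congr 1
  ext u t
  simp only [Matrix.of_apply]
  rw [hv t]
  rfl

lemma neg_one_pow_fin {R : Type*} [CommRing R] {n : ℕ} (t : Fin (n + 1)) :
    ((-1 : R)) ^ (n - t.1) = (-1) ^ (t.1 + n) := by
  have h : t.1 + n = (n - t.1) + 2 * t.1 := by omega
  rw [h, pow_add, pow_mul]
  simp

lemma val_succAbove {n : ℕ} (t : Fin (n + 1)) (k : Fin n) :
    (t.succAbove k).1 = if k.1 < t.1 then k.1 else k.1 + 1 := by
  by_cases h : k.1 < t.1
  · rw [if_pos h, Fin.succAbove_of_castSucc_lt t k (by simpa [Fin.lt_def] using h)]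
    rfl
  · rw [if_neg h, Fin.succAbove_of_le_castSucc t k (by simp [Fin.le_def]; omega)]
    rfl

/-- `Σ_{t=1}^{s} (−1)^{s−t} D⁺(x₁,…,x_{s−1},a_t)·D⁺(a₁,…,⟨a_t⟩,…,a_s)
  = D⁺(x₁,…,x_{s−1})·D⁺(a₁,…,a_s)`. -/
theorem statement4 {R : Type*} [CommRing R] (c : ℕ → ℕ → R) (m s : ℕ)
    (hs : 2 ≤ s) (hsm : s ≤ m)
    (x : Fin (s - 1) → ℕ) (a : Fin s → ℕ)
    (hx : ∀ t, 1 ≤ x t ∧ x t ≤ m) (ha : ∀ t, 1 ≤ a t ∧ a t ≤ m) :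
    ∑ t : Fin s, (-1 : R) ^ (s - 1 - t.1) *
        (Dplus c (List.ofFn x ++ [a t]) * Dplus c ((List.ofFn a).eraseIdx t.1))
      = Dplus c (List.ofFn x) * Dplus c (List.ofFn a) := by
  obtain ⟨n, rfl⟩ : ∃ n, s = n + 1 := ⟨s - 1, (Nat.succ_pred_eq_of_pos (by omega)).symm⟩
  clear hs hsm hx ha
  set X : Matrix (Fin n) (Fin n) R := Matrix.of (fun u t : Fin n => c (u.1 + 1) (x t)) with hXdef
  set A : Matrix (Fin (n + 1)) (Fin (n + 1)) R :=
    Matrix.of (fun u t : Fin (n + 1) => c (u.1 + 1) (a t)) with hAdef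
  set Xm : Fin (n + 1) → Matrix (Fin n) (Fin n) R :=
    fun i => Matrix.of (fun u t : Fin n => c ((i.succAbove u).1 + 1) (x t)) with hXm
  set N : Fin (n + 1) → Matrix (Fin n) (Fin n) R :=
    fun t => Matrix.of (fun u k : Fin n => c (u.1 + 1) (a (t.succAbove k))) with hNdef
  set B : Fin (n + 1) → Matrix (Fin (n + 1)) (Fin (n + 1)) R :=
    fun i => Matrix.of (fun r j : Fin (n + 1) =>
      c (if r.1 < n then r.1 + 1 else i.1 + 1) (a j)) with hBdef
  have hX : Dplus c (List.ofFn x) = X.det := by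
    refine Dplus_eq_det c _ (by simp) x ?_
    intro i
    rw [List.get_ofFn]
  have hA : Dplus c (List.ofFn a) = A.det := by
    refine Dplus_eq_det c _ (by simp) a ?_
    intro i
    rw [List.get_ofFn]
  have hN : ∀ t : Fin (n + 1), Dplus c ((List.ofFn a).eraseIdx t.1) = (N t).det := by
    intro t
    have hlen : ((List.ofFn a).eraseIdx t.1).length = n := by
      rw [List.length_eraseIdx]
      simp [t.isLt]
    refine Dplus_eq_det c _ hlen (fun k => a (t.succAbove k)) ?_
    intro i
    rw [List.get_eq_getElem, List.getElem_eraseIdx]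
    have hic : (Fin.cast hlen i).1 = i.1 := rfl
    by_cases h : (i : ℕ) < t.1
    · rw [dif_pos h, List.getElem_ofFn]
      congr 1
      apply Fin.ext
      rw [val_succAbove, hic, if_pos h]
    · rw [dif_neg h, List.getElem_ofFn]
      congr 1
      apply Fin.ext
      rw [val_succAbove, hic, if_neg h]
  -- Laplace expansion of `D⁺(x₁,…,x_{s-1},a_t)` along the last column
  have hM : ∀ t : Fin (n + 1), Dplus c (List.ofFn x ++ [a t])
      = ∑ i : Fin (n + 1), (-1 : R) ^ (i.1 + n) * c (i.1 + 1) (a t) * (Xm i).det := by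
    intro t
    set y : Fin (n + 1) → ℕ := Fin.snoc x (a t) with hy
    have hlist : List.ofFn x ++ [a t] = List.ofFn y := by
      rw [List.ofFn_succ' y]
      simp [hy, List.concat_eq_append]
    rw [hlist]
    have h1 : Dplus c (List.ofFn y)
        = (Matrix.of (fun u j : Fin (n + 1) => c (u.1 + 1) (y j))).det := by
      refine Dplus_eq_det c _ (by simp) y ?_
      intro i
      rw [List.get_ofFn]
    rw [h1, Matrix.det_succ_column _ (Fin.last n)]
    refine Finset.sum_congr rfl fun i _ => ?_
    have e3 : (Matrix.of (fun u j : Fin (n + 1) => c (u.1 + 1) (y j))).submatrix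
        i.succAbove (Fin.last n).succAbove = Xm i := by
      ext u k
      simp [Fin.succAbove_last, hy, hXm]
    rw [e3]
    simp [hy]
  -- Laplace expansion of `det (B i)` along the last row
  have hB : ∀ i : Fin (n + 1),
      (B i).det = ∑ t : Fin (n + 1), (-1 : R) ^ (n + t.1) * c (i.1 + 1) (a t) * (N t).det := by
    intro i
    rw [Matrix.det_succ_row _ (Fin.last n)]
    refine Finset.sum_congr rfl fun j _ => ?_
    have e3 : (B i).submatrix (Fin.last n).succAbove j.succAbove = N j := by
      ext u k
      simp [Fin.succAbove_last, hBdef, hNdef, u.isLt]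
    rw [e3]
    simp [hBdef]
  -- `B (last n) = A`, and `B i` has two equal rows otherwise
  have hBlast : B (Fin.last n) = A := by
    ext r j
    by_cases h : r.1 < n
    · simp [hBdef, hAdef, h]
    · have hr : r.1 = n := by omega
      simp [hBdef, hAdef, h, hr]
  have hBzero : ∀ i : Fin (n + 1), i ≠ Fin.last n → (B i).det = 0 := by
    intro i hi
    have hilt : i.1 < n := by
      rcases Fin.lt_or_eq_of_le (Fin.le_last i) with h | h
      · exact h
      · exact absurd h hi
    refine Matrix.det_zero_of_row_eq (i := Fin.castSucc ⟨i.1, hilt⟩) (j := Fin.last n) ?_ ?_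
    · intro h
      have := congrArg Fin.val h
      simp at this
      omega
    · ext j
      simp [hBdef, hilt]
  have hXmlast : Xm (Fin.last n) = X := by
    ext u t
    simp [hXm, hXdef, Fin.succAbove_last]
  -- now compute
  calc
    ∑ t : Fin (n + 1), (-1 : R) ^ (n + 1 - 1 - t.1) *
        (Dplus c (List.ofFn x ++ [a t]) * Dplus c ((List.ofFn a).eraseIdx t.1))
      = ∑ t : Fin (n + 1), ∑ i : Fin (n + 1),
          ((-1 : R) ^ (i.1 + n) * (Xm i).det) *
            ((-1 : R) ^ (n + t.1) * c (i.1 + 1) (a t) * (N t).det) := by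
        refine Finset.sum_congr rfl fun t _ => ?_
        rw [hM t, hN t, Finset.sum_mul, Finset.mul_sum]
        refine Finset.sum_congr rfl fun i _ => ?_
        have h1 : (n + 1 - 1 - t.1) = n - t.1 := rfl
        rw [h1, neg_one_pow_fin t]
        have h2 : ((-1 : R)) ^ (t.1 + n) = (-1) ^ (n + t.1) := by rw [add_comm]
        rw [h2]
        ring
    _ = ∑ i : Fin (n + 1), ((-1 : R) ^ (i.1 + n) * (Xm i).det) * (B i).det := by
        rw [Finset.sum_comm]
        refine Finset.sum_congr rfl fun i _ => ?_
        rw [hB i, Finset.mul_sum]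
    _ = ((-1 : R) ^ ((Fin.last n).1 + n) * (Xm (Fin.last n)).det) * (B (Fin.last n)).det := by
        refine Finset.sum_eq_single (Fin.last n) (fun i _ hi => ?_) (by simp)
        rw [hBzero i hi, mul_zero]
    _ = X.det * A.det := by
        rw [hBlast, hXmlast]
        have : (-1 : R) ^ ((Fin.last n).1 + n) = 1 := by
          simp [Fin.val_last, ← two_mul, pow_mul]
        rw [this, one_mul]
  rw [hX, hA]
end
end

section
/- Let 2 ≤ s ≤ m and let x₁,…,x_{s−1} and a₁,…,a_s be integers from the set {1,…,m}. Then Σ_σ sgn(σ) ∏_{t=1}^{s} D⁺(x₁,…,x_{t−1},σ(a)_t) = D⁺(a₁,…,a_s) · ∏_{t=1}^{s−1} D⁺(x₁,…,x_t), where the sum runs over all permutations σ of the tuple (a₁,…,a_s) and σ(a)_t denotes the t-th entry of the permuted tuple (for t = 1 the factor is D⁺(σ(a)_1) = c_{1,σ(a)_1}). -/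
noncomputable section

lemma Dplus_eq {R : Type*} [CommRing R] (c : ℕ → ℕ → R) (l : List ℕ) (n : ℕ)
    (h : l.length = n) :
    Dplus c l = (Matrix.of fun u t : Fin n => c (u.1 + 1) (l.getD t.1 0)).det := by
  subst h
  unfold Dplus
  congr 1
  ext u t
  simp [List.getD_eq_getElem l 0 t.2]

/-- `Σ_σ sgn(σ) ∏_{t=1}^{s} D⁺(x₁,…,x_{t−1},σ(a)_t)
  = D⁺(a₁,…,a_s) · ∏_{t=1}^{s−1} D⁺(x₁,…,x_t)`,
the sum over all permutations of the tuple `(a₁,…,a_s)`. -/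
theorem statement5 {R : Type*} [CommRing R] (c : ℕ → ℕ → R) (m s : ℕ)
    (hs : 2 ≤ s) (hsm : s ≤ m)
    (x : Fin (s - 1) → ℕ) (a : Fin s → ℕ)
    (hx : ∀ t, 1 ≤ x t ∧ x t ≤ m) (ha : ∀ t, 1 ≤ a t ∧ a t ≤ m) :
    ∑ σ : Equiv.Perm (Fin s), (Equiv.Perm.sign σ : ℤ) •
        ∏ t : Fin s, Dplus c ((List.ofFn x).take t.1 ++ [a (σ t)])
      = Dplus c (List.ofFn a) * ∏ t ∈ Finset.Icc 1 (s - 1), Dplus c ((List.ofFn x).take t) := by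
  classical
  -- abbreviations
  set X : ℕ → ℕ := fun i => (List.ofFn x).getD i 0 with hX
  -- minors of the matrix with columns x₁,…,x_t, removing row u (among rows 1,…,t+1)
  set minor : ∀ t : ℕ, Fin (t + 1) → R :=
    fun t u => (Matrix.of fun v w : Fin t => c ((u.succAbove v).1 + 1) (X w.1)).det with hminor
  -- the main matrix
  set M : Matrix (Fin s) (Fin s) R :=
    Matrix.of fun t j : Fin s => Dplus c ((List.ofFn x).take t.1 ++ [a j]) with hMdef
  -- Laplace expansion along the last column
  have hA : ∀ t : ℕ, t ≤ s - 1 → ∀ j : ℕ,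
      Dplus c ((List.ofFn x).take t ++ [j])
        = ∑ u : Fin (t + 1), (-1) ^ (u.1 + t) * c (u.1 + 1) j * minor t u := by
    intro t ht j
    have hlen0 : ((List.ofFn x).take t).length = t := by
      simp only [List.length_take, List.length_ofFn]; omega
    have hlen : ((List.ofFn x).take t ++ [j]).length = t + 1 := by
      simp only [List.length_append, List.length_singleton, hlen0]
    rw [Dplus_eq c _ (t + 1) hlen]
    rw [Matrix.det_succ_column _ (Fin.last t)]
    refine Finset.sum_congr rfl fun u _ => ?_
    have hgetlast : ((List.ofFn x).take t ++ [j]).getD t 0 = j := by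
      simp [List.getD_append_right, hlen0]
    have hgetw : ∀ w : Fin t, ((List.ofFn x).take t ++ [j]).getD (((Fin.last t).succAbove w) : ℕ) 0
        = X w.1 := by
      intro w
      have hw : (w : ℕ) < t := w.2
      have h2 : ((Fin.last t).succAbove w : ℕ) = w.1 := by
        simp [Fin.succAbove, Fin.lt_iff_val_lt_val]
      rw [h2]
      rw [List.getD_append _ _ _ _ (by omega)]
      have h3 : (w : ℕ) < (List.ofFn x).length := by
        simp only [List.length_ofFn]; omega
      simp [hX, List.getD_eq_getElem _ 0 (by rw [hlen0]; exact hw),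
        List.getD_eq_getElem _ 0 h3, List.getElem_take]
    simp only [Matrix.of_apply, Fin.val_last]
    rw [hgetlast]
    congr 1
    rw [hminor]
    refine congrArg Matrix.det ?_
    ext v w
    simp only [Matrix.submatrix_apply, Matrix.of_apply]
    rw [hgetw w]
  -- the lower-triangular factor
  set L : Matrix (Fin s) (Fin s) R :=
    Matrix.of fun t u : Fin s =>
      if h : u.1 < t.1 + 1 then (-1 : R) ^ (u.1 + t.1) * minor t.1 ⟨u.1, h⟩ else 0 with hL
  set C : Matrix (Fin s) (Fin s) R := Matrix.of fun u j : Fin s => c (u.1 + 1) (a j) with hC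
  have hMLC : M = L * C := by
    ext t j
    rw [Matrix.mul_apply]
    have ht : t.1 < s := t.2
    rw [hMdef, Matrix.of_apply, hA t.1 (by omega) (a j)]
    set g : ℕ → R := fun u =>
      if h : u < t.1 + 1 then (-1 : R) ^ (u + t.1) * c (u + 1) (a j) * minor t.1 ⟨u, h⟩ else 0
      with hg
    have h1 : ∑ u : Fin (t.1 + 1), (-1 : R) ^ (u.1 + t.1) * c (u.1 + 1) (a j) * minor t.1 u
        = ∑ u ∈ Finset.range (t.1 + 1), g u := by
      rw [Finset.sum_range fun u => g u]
      refine Finset.sum_congr rfl fun u _ => ?_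
      show _ = g u.1
      rw [hg]
      simp only [u.2, dif_pos]
    have h2 : ∑ u : Fin s, L t u * C u j = ∑ u ∈ Finset.range s, g u := by
      rw [Finset.sum_range fun u => g u]
      refine Finset.sum_congr rfl fun u _ => ?_
      show L t u * C u j = g u.1
      rw [hg, hL, hC]
      simp only [Matrix.of_apply]
      by_cases h : u.1 < t.1 + 1
      · rw [dif_pos h, dif_pos h]; ring
      · rw [dif_neg h, dif_neg h, zero_mul]
    rw [h1, h2]
    refine Finset.sum_subset (Finset.range_subset_range.2 (by omega)) fun u _ hu => ?_
    simp only [Finset.mem_range, not_lt] at hu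
    show g u = 0
    rw [hg]
    exact dif_neg (by omega)
  -- L is lower triangular with diagonal D⁺(x₁,…,x_{t-1})
  have hLtri : L.BlockTriangular OrderDual.toDual := by
    intro t u h
    have h' : t.1 < u.1 := h
    rw [hL, Matrix.of_apply, dif_neg (by omega)]
  have hLdiag : ∀ t : Fin s, L t t = Dplus c ((List.ofFn x).take t.1) := by
    intro t
    have ht : t.1 < s := t.2
    rw [hL, Matrix.of_apply, dif_pos (Nat.lt_succ_self _)]
    have hpow : (-1 : R) ^ (t.1 + t.1) = 1 := Even.neg_one_pow ⟨t.1, rfl⟩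
    rw [hpow, one_mul, hminor]
    have hlen : ((List.ofFn x).take t.1).length = t.1 := by
      simp only [List.length_take, List.length_ofFn]; omega
    rw [Dplus_eq c _ t.1 hlen]
    refine congrArg Matrix.det ?_
    ext v w
    have hw : (w : ℕ) < t.1 := w.2
    simp only [Matrix.of_apply]
    have h2 : ((⟨t.1, Nat.lt_succ_self _⟩ : Fin (t.1 + 1)).succAbove v : ℕ) = v.1 := by
      simp [Fin.succAbove, Fin.lt_iff_val_lt_val]
    rw [h2]
    have h3 : (w : ℕ) < (List.ofFn x).length := by
      simp only [List.length_ofFn]; omega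
    simp [hX, List.getD_eq_getElem _ 0 (by rw [hlen]; exact hw),
      List.getD_eq_getElem _ 0 h3, List.getElem_take]
  -- det C = D⁺(a)
  have hCdet : C.det = Dplus c (List.ofFn a) := by
    rw [Dplus_eq c _ s (by simp)]
    refine congrArg Matrix.det ?_
    ext u j
    simp [hC]
  -- LHS = det Mᵀ
  have hLHS : ∑ σ : Equiv.Perm (Fin s), (Equiv.Perm.sign σ : ℤ) •
        ∏ t : Fin s, Dplus c ((List.ofFn x).take t.1 ++ [a (σ t)])
      = (Matrix.transpose M).det := by
    rw [Matrix.det_apply]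
    refine Finset.sum_congr rfl fun σ _ => ?_
    rw [Units.smul_def]
    rfl
  rw [hLHS, Matrix.det_transpose, hMLC, Matrix.det_mul,
    Matrix.det_of_lowerTriangular L hLtri, hCdet]
  rw [mul_comm (∏ i : Fin s, L i i) _]
  congr 1
  have hrange : Finset.range s = insert 0 (Finset.Icc 1 (s - 1)) := by
    ext u
    simp only [Finset.mem_range, Finset.mem_insert, Finset.mem_Icc]
    omega
  calc ∏ t : Fin s, L t t = ∏ t ∈ Finset.range s, Dplus c ((List.ofFn x).take t) := by
        rw [Finset.prod_range fun t => Dplus c ((List.ofFn x).take t)]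
        exact Finset.prod_congr rfl fun t _ => hLdiag t
    _ = Dplus c [] * ∏ t ∈ Finset.Icc 1 (s - 1), Dplus c ((List.ofFn x).take t) := by
        rw [hrange, Finset.prod_insert (by simp)]
        simp
    _ = ∏ t ∈ Finset.Icc 1 (s - 1), Dplus c ((List.ofFn x).take t) := by
        have h0 : Dplus c [] = 1 := by simp [Dplus]
        rw [h0, one_mul]
end
end

section
/- Let 1 ≤ u and 2 ≤ s be such that u+s−1 ≤ m, and let a₁,…,a_s be integers from the set {1,…,m}. Then Σ_σ sgn(σ) ∏_{t=1}^{s} D⁺(1,…,u+t−2,σ(a)_t) = D⁺(1,…,u−1,a₁,…,a_s) · ∏_{t=1}^{s−1} D⁺(1,…,u+t−1), where the sum runs over all permutations σ of the tuple (a₁,…,a_s) and σ(a)_t denotes the t-th entry of the permuted tuple. -/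
noncomputable section

namespace S6

variable {R : Type*} [CommRing R]

lemma Dplus_eq (c : ℕ → ℕ → R) (l : List ℕ) (k : ℕ) (hk : l.length = k)
    (M : Matrix (Fin k) (Fin k) R)
    (hM : ∀ (i j : Fin k), M i j = c (i.1 + 1) (l.get ⟨j.1, by omega⟩)) :
    Dplus c l = M.det := by
  subst hk
  unfold Dplus
  congr 1
  ext i j
  simp [hM i j]

/-- principal minor matrix -/
def ftM (c : ℕ → ℕ → R) (k : ℕ) : Matrix (Fin k) (Fin k) R :=
  Matrix.of fun i j => c (i.1 + 1) (j.1 + 1)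

def pmin (c : ℕ → ℕ → R) (k : ℕ) : R := Dplus c (List.range' 1 k)

lemma pmin_eq (c : ℕ → ℕ → R) (k : ℕ) : pmin c k = (ftM c k).det := by
  refine Dplus_eq _ _ _ (by simp) _ ?_
  intro i j
  simp [ftM, List.get_eq_getElem, List.getElem_range'_1, Nat.add_comm 1 j.1]

/-- determinant as a linear map in column `j` -/
def detColLM (M : Matrix (Fin k) (Fin k) R) (j : Fin k) : (Fin k → R) →ₗ[R] R where
  toFun w := (M.updateCol j w).det
  map_add' := Matrix.det_updateCol_add M j
  map_smul' r w := by simp [Matrix.det_updateCol_smul M j r w]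


variable (c : ℕ → ℕ → R) (u1 s : ℕ)

/-- the linear functional `w ↦ det [c₁ … c_{u1+t}, w]` (rows `1..u1+t+1`) -/
def ft (t : Fin s) : (Fin (u1 + s) → R) →ₗ[R] R :=
  (detColLM (ftM c (u1 + t.1 + 1)) (Fin.last (u1 + t.1))).comp
    (LinearMap.funLeft R R (Fin.castLE (by have := t.2; omega)))

lemma ft_apply (t : Fin s) (w : Fin (u1 + s) → R) :
    ft c u1 s t w =
      ((ftM c (u1 + t.1 + 1)).updateCol (Fin.last (u1 + t.1))
        (fun i => w (Fin.castLE (by have := t.2; omega) i))).det := rfl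

lemma ft_col_eq (t : Fin s) (k : ℕ) (hk1 : 1 ≤ k) (hk2 : k ≤ u1 + t.1) :
    ft c u1 s t (fun i => c (i.1 + 1) k) = 0 := by
  rw [ft_apply]
  refine Matrix.det_zero_of_column_eq (i := ⟨k - 1, by omega⟩) (j := Fin.last (u1 + t.1))
    (by simp [Fin.ext_iff]; omega) (fun r => ?_)
  rw [Matrix.updateCol_apply, Matrix.updateCol_apply]
  simp only [if_pos rfl, if_neg (show (⟨k - 1, by omega⟩ : Fin (u1 + t.1 + 1)) ≠ Fin.last _ by
    simp [Fin.ext_iff]; omega)]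
  simp [ftM]
  congr 1
  omega

lemma ft_col_diag (t : Fin s) :
    ft c u1 s t (fun i => c (i.1 + 1) (u1 + t.1 + 1)) = pmin c (u1 + t.1 + 1) := by
  rw [ft_apply, pmin_eq]
  congr 1
  ext i j
  by_cases hj : j = Fin.last (u1 + t.1)
  · subst hj
    simp [Matrix.updateCol_apply, ftM]
  · simp [Matrix.updateCol_apply, hj, ftM]

/-- the matrix `[c₁ … c_{u1} | v₁ … v_s]` -/
def NM (v : Fin s → (Fin (u1 + s) → R)) : Matrix (Fin (u1 + s)) (Fin (u1 + s)) R :=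
  Matrix.of fun i j => if h : j.1 < u1 then c (i.1 + 1) (j.1 + 1) else v ⟨j.1 - u1, by omega⟩ i

lemma NM_update [DecidableEq (Fin s)] (v : Fin s → (Fin (u1 + s) → R)) (k : Fin s) (x : Fin (u1 + s) → R) :
    NM c u1 s (Function.update v k x)
      = (NM c u1 s v).updateCol ⟨u1 + k.1, by omega⟩ x := by
  ext i j
  rw [Matrix.updateCol_apply]
  by_cases hj : j = (⟨u1 + k.1, by omega⟩ : Fin (u1 + s))
  · subst hj
    rw [if_pos rfl]
    simp only [NM, Matrix.of_apply]
    rw [dif_neg (by omega)]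
    have h2 : (⟨u1 + k.1 - u1, by omega⟩ : Fin s) = k := by simp [Fin.ext_iff]
    rw [h2, Function.update_self]
  · rw [if_neg hj]
    simp only [NM, Matrix.of_apply]
    by_cases h1 : j.1 < u1
    · rw [dif_pos h1, dif_pos h1]
    · rw [dif_neg h1, dif_neg h1]
      have : (⟨j.1 - u1, by omega⟩ : Fin s) ≠ k := by
        intro hh
        apply hj
        have := congrArg Fin.val hh
        simp at this
        simp [Fin.ext_iff]
        omega
      rw [Function.update_of_ne this]

/-- `v ↦ det [c₁ … c_{u1} | v]` as an alternating map -/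
def Rmap : (Fin (u1 + s) → R) [⋀^Fin s]→ₗ[R] R where
  toFun v := (NM c u1 s v).det
  map_update_add' v k x y := by
    simp only [NM_update, Matrix.det_updateCol_add]
  map_update_smul' v k r x := by
    simp only [NM_update, Matrix.det_updateCol_smul, smul_eq_mul]
  map_eq_zero_of_eq' v i j hv hij := by
    refine Matrix.det_zero_of_column_eq
      (i := (⟨u1 + i.1, by omega⟩ : Fin (u1 + s)))
      (j := (⟨u1 + j.1, by omega⟩ : Fin (u1 + s)))
      (by simp [Fin.ext_iff]; omega) (fun r => ?_)
    simp only [NM, Matrix.of_apply]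
    rw [dif_neg (by omega), dif_neg (by omega)]
    have h1 : (⟨u1 + i.1 - u1, by omega⟩ : Fin s) = i := by simp [Fin.ext_iff]
    have h2 : (⟨u1 + j.1 - u1, by omega⟩ : Fin s) = j := by simp [Fin.ext_iff]
    rw [h1, h2, hv]

lemma Rmap_apply (v : Fin s → (Fin (u1 + s) → R)) :
    Rmap c u1 s v = (NM c u1 s v).det := rfl

/-- the sum over permutations, as an alternating map -/
def Lmap : (Fin (u1 + s) → R) [⋀^Fin s]→ₗ[R] R :=
  (Matrix.detRowAlternating).compLinearMap (LinearMap.pi (ft c u1 s))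

lemma Lmap_apply (v : Fin s → (Fin (u1 + s) → R)) :
    Lmap c u1 s v = (Matrix.of fun j t => ft c u1 s t (v j)).det := rfl

def w0 (u1 s : ℕ) (t : Fin s) : Fin (u1 + s) := ⟨u1 + t.1, by have := t.2; omega⟩

@[simp] lemma w0_val (u1 s : ℕ) (t : Fin s) : (w0 u1 s t).1 = u1 + t.1 := rfl

/-- the matrix `[c₁ … c_{u1+s-1} | e_{u1+s-1}]` -/
def bM : Matrix (Fin (u1 + s)) (Fin (u1 + s)) R :=
  Matrix.of fun i j =>
    if j.1 + 1 < u1 + s then c (i.1 + 1) (j.1 + 1) else if i = j then 1 else 0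

lemma ft_last (s' : ℕ) :
    ft c u1 (s' + 1) ⟨s', by omega⟩ (fun r => bM c u1 (s' + 1) r ⟨u1 + s', by omega⟩)
      = (bM c u1 (s' + 1)).det := by
  rw [ft_apply]
  congr 1
  ext i j
  rw [Matrix.updateCol_apply]
  simp only [bM, ftM, Matrix.of_apply, Fin.ext_iff, Fin.val_last, Fin.coe_castLE]
  split_ifs <;> first | rfl | omega


section FieldPart

variable {K : Type*} [Field K]

set_option maxHeartbeats 1000000 in
lemma key (c : ℕ → ℕ → K) (u1 s' : ℕ) (hq : (bM c u1 (s' + 1)).det ≠ 0) :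
    Lmap c u1 (s' + 1) = (∏ t : Fin s', pmin c (u1 + t.1 + 1)) • Rmap c u1 (s' + 1) := by
  classical
  have hinv : Invertible (bM c u1 (s' + 1)) :=
    (bM c u1 (s' + 1)).invertibleOfIsUnitDet (Ne.isUnit hq)
  let b : Module.Basis (Fin (u1 + (s' + 1))) K (Fin (u1 + (s' + 1)) → K) :=
    (Pi.basisFun K _).map ((bM c u1 (s' + 1)).toLinearEquiv' hinv)
  have hb : ∀ i, b i = fun r => bM c u1 (s' + 1) r i := by
    intro i
    show ((bM c u1 (s' + 1)).toLinearEquiv' hinv) ((Pi.basisFun K _) i) = _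
    have h1 : ((Pi.basisFun K (Fin (u1 + (s' + 1)))) i) = Pi.single i 1 := by
      simp [Pi.basisFun_apply]
    rw [h1]
    show Matrix.toLin' (bM c u1 (s' + 1)) (Pi.single i 1) = _
    rw [Matrix.toLin'_apply]
    simp [Matrix.mulVec_single]
    rfl
  refine Module.Basis.ext_alternating b (fun v hv => ?_)
  by_cases hA : ∃ t, (v t).1 < u1
  · obtain ⟨t₀, ht₀⟩ := hA
    have hLz : Lmap c u1 (s' + 1) (fun i => b (v i)) = 0 := by
      rw [Lmap_apply]
      apply Matrix.det_eq_zero_of_row_eq_zero t₀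
      intro t
      simp only [Matrix.of_apply]
      have hbv : b (v t₀) = fun r : Fin (u1 + (s' + 1)) => c (r.1 + 1) ((v t₀).1 + 1) := by
        rw [hb]; funext r; simp only [bM, Matrix.of_apply]; rw [if_pos (by omega)]
      rw [hbv]
      exact ft_col_eq c u1 (s' + 1) t ((v t₀).1 + 1) (by omega) (by omega)
    have hRz : Rmap c u1 (s' + 1) (fun i => b (v i)) = 0 := by
      rw [Rmap_apply]
      refine Matrix.det_zero_of_column_eq (i := ⟨(v t₀).1, by omega⟩)
        (j := ⟨u1 + t₀.1, by have := t₀.2; omega⟩) (by simp [Fin.ext_iff]; omega) (fun r => ?_)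
      simp only [NM, Matrix.of_apply]
      rw [dif_pos (by simpa using ht₀), dif_neg (by simp)]
      have hidx : (⟨u1 + t₀.1 - u1, by omega⟩ : Fin (s' + 1)) = t₀ := by simp [Fin.ext_iff]
      rw [hidx, hb]
      simp only [bM, Matrix.of_apply]
      rw [if_pos (by omega)]
    rw [hLz, AlternatingMap.smul_apply, hRz, smul_zero]
  · push_neg at hA
    have hπinj : Function.Injective
        (fun t : Fin (s' + 1) => (⟨(v t).1 - u1, by have := (v t).2; omega⟩ : Fin (s' + 1))) := by
      intro x y h
      apply hv
      have hx := hA x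
      have hy := hA y
      have hval := congrArg Fin.val h
      simp only at hval
      exact Fin.ext (by omega)
    let σ : Equiv.Perm (Fin (s' + 1)) :=
      Equiv.ofBijective _ (Finite.injective_iff_bijective.mp hπinj)
    have hcomp : (fun i => b (v i)) = (fun i => b (w0 u1 (s' + 1) i)) ∘ σ := by
      funext i
      simp only [Function.comp_apply]
      congr 1
      have hσ : σ i = ⟨(v i).1 - u1, by have := (v i).2; omega⟩ := rfl
      rw [hσ]
      exact Fin.ext (show (v i).1 = u1 + ((v i).1 - u1) by have := hA i; omega)
    rw [hcomp, AlternatingMap.map_perm, AlternatingMap.map_perm]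
    congr 1
    -- main computation at the standard tuple w0
    have hNM : NM c u1 (s' + 1) (fun i => b (w0 u1 (s' + 1) i)) = bM c u1 (s' + 1) := by
      ext r j
      simp only [NM, Matrix.of_apply]
      by_cases h1 : j.1 < u1
      · rw [dif_pos h1]
        simp only [bM, Matrix.of_apply]
        rw [if_pos (by omega)]
      · rw [dif_neg h1]
        show b (w0 u1 (s' + 1) ⟨j.1 - u1, by omega⟩) r = _
        have hw : w0 u1 (s' + 1) ⟨j.1 - u1, by omega⟩ = j :=
          Fin.ext (show u1 + (j.1 - u1) = j.1 by omega)
        rw [hw, hb]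
    rw [Lmap_apply, AlternatingMap.smul_apply, Rmap_apply, hNM]
    set M0 : Matrix (Fin (s' + 1)) (Fin (s' + 1)) K :=
      Matrix.of fun j t => ft c u1 (s' + 1) t (b (w0 u1 (s' + 1) j)) with hM0
    rw [← Matrix.det_transpose M0]
    have htri : (M0.transpose).BlockTriangular id := by
      intro t j h
      simp only [Matrix.transpose_apply, hM0, Matrix.of_apply]
      have hbwj : b (w0 u1 (s' + 1) j) = fun r => c (r.1 + 1) (u1 + j.1 + 1) := by
        rw [hb]; funext r
        simp only [bM, Matrix.of_apply, w0]
        rw [if_pos (by have := t.2; have : j.1 < t.1 := h; omega)]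
      rw [hbwj]
      exact ft_col_eq c u1 (s' + 1) t (u1 + j.1 + 1) (by omega)
        (by have : j.1 < t.1 := h; omega)
    rw [Matrix.det_of_upperTriangular htri]
    rw [Fin.prod_univ_castSucc]
    have hdiag : ∀ i : Fin s',
        M0.transpose i.castSucc i.castSucc = pmin c (u1 + i.1 + 1) := by
      intro i
      simp only [Matrix.transpose_apply, hM0, Matrix.of_apply]
      have hbwj : b (w0 u1 (s' + 1) i.castSucc) = fun r => c (r.1 + 1) (u1 + i.1 + 1) := by
        rw [hb]; funext r
        simp only [bM, Matrix.of_apply, w0]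
        rw [if_pos (by have := i.2; simp; omega)]
        simp
      rw [hbwj]
      have := ft_col_diag c u1 (s' + 1) i.castSucc
      simpa using this
    have hlast : M0.transpose (Fin.last s') (Fin.last s') = (bM c u1 (s' + 1)).det := by
      simp only [Matrix.transpose_apply, hM0, Matrix.of_apply]
      have hbwl : b (w0 u1 (s' + 1) (Fin.last s'))
          = fun r => bM c u1 (s' + 1) r ⟨u1 + s', by omega⟩ := by
        have hw : w0 u1 (s' + 1) (Fin.last s') = ⟨u1 + s', by omega⟩ := rfl
        rw [hw, hb]
      rw [hbwl]
      exact ft_last c u1 s'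
    rw [hlast, Finset.prod_congr rfl (fun i _ => hdiag i), smul_eq_mul]


lemma ft_Dplus (c : ℕ → ℕ → K) (u1 s : ℕ) (t : Fin s) (x : ℕ) :
    Dplus c (List.range' 1 (u1 + t.1) ++ [x]) = ft c u1 s t (fun i => c (i.1 + 1) x) := by
  rw [ft_apply]
  refine Dplus_eq _ _ (u1 + t.1 + 1) (by simp) _ ?_
  intro i j
  rw [Matrix.updateCol_apply, List.get_eq_getElem]
  by_cases hj : j = Fin.last (u1 + t.1)
  · subst hj
    rw [if_pos rfl]
    rw [List.getElem_append_right (by simp)]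
    simp
  · rw [if_neg hj]
    have hjlt : j.1 < u1 + t.1 := by
      have := j.2
      have : j.1 ≠ u1 + t.1 := fun h => hj (Fin.ext (by simp [h]))
      omega
    rw [List.getElem_append_left (by simpa using hjlt)]
    simp [ftM, List.getElem_range'_1, Nat.add_comm 1 j.1]

lemma Dplus_NM (c : ℕ → ℕ → K) (u1 s : ℕ) (a : Fin s → ℕ) :
    Dplus c (List.range' 1 u1 ++ List.ofFn a)
      = (NM c u1 s (fun j i => c (i.1 + 1) (a j))).det := by
  refine Dplus_eq _ _ (u1 + s) (by simp) _ ?_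
  intro i j
  simp only [NM, Matrix.of_apply]
  rw [List.get_eq_getElem]
  by_cases hj : j.1 < u1
  · rw [dif_pos hj, List.getElem_append_left (by simpa using hj)]
    simp [List.getElem_range'_1, Nat.add_comm 1 j.1]
  · rw [dif_neg hj, List.getElem_append_right (by simpa using hj)]
    simp [List.getElem_ofFn]

lemma core_field (c : ℕ → ℕ → K) (u1 s' : ℕ) (hq : (bM c u1 (s' + 1)).det ≠ 0)
    (a : Fin (s' + 1) → ℕ) :
    ∑ σ : Equiv.Perm (Fin (s' + 1)), (Equiv.Perm.sign σ : ℤ) •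
        ∏ t : Fin (s' + 1), Dplus c (List.range' 1 (u1 + t.1) ++ [a (σ t)])
      = Dplus c (List.range' 1 u1 ++ List.ofFn a)
          * ∏ t : Fin s', pmin c (u1 + t.1 + 1) := by
  have hk := key c u1 s' hq
  have h1 : ∑ σ : Equiv.Perm (Fin (s' + 1)), (Equiv.Perm.sign σ : ℤ) •
        ∏ t : Fin (s' + 1), Dplus c (List.range' 1 (u1 + t.1) ++ [a (σ t)])
      = Lmap c u1 (s' + 1) (fun j i => c (i.1 + 1) (a j)) := by
    rw [Lmap_apply, Matrix.det_apply]
    refine Finset.sum_congr rfl (fun σ _ => ?_)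
    rw [Units.smul_def]
    congr 1
    refine Finset.prod_congr rfl (fun t _ => ?_)
    simp only [Matrix.of_apply]
    exact ft_Dplus c u1 (s' + 1) t (a (σ t))
  rw [h1, hk, AlternatingMap.smul_apply, Rmap_apply, ← Dplus_NM, smul_eq_mul, mul_comm]

end FieldPart

section Transfer

variable {S : Type*} [CommRing S]

lemma map_Dplus (φ : R →+* S) (c : ℕ → ℕ → R) (l : List ℕ) :
    Dplus (fun i j => φ (c i j)) l = φ (Dplus c l) := by
  unfold Dplus
  rw [RingHom.map_det]
  rfl

lemma map_bM (φ : R →+* S) (c : ℕ → ℕ → R) (u1 s : ℕ) :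
    bM (fun i j => φ (c i j)) u1 s = φ.mapMatrix (bM c u1 s) := by
  ext i j
  simp only [bM, Matrix.of_apply, RingHom.mapMatrix_apply, Matrix.map_apply]
  split_ifs <;> simp

lemma map_lhs (φ : R →+* S) (c : ℕ → ℕ → R) (u1 s' : ℕ) (a : Fin (s' + 1) → ℕ) :
    φ (∑ σ : Equiv.Perm (Fin (s' + 1)), (Equiv.Perm.sign σ : ℤ) •
        ∏ t : Fin (s' + 1), Dplus c (List.range' 1 (u1 + t.1) ++ [a (σ t)]))
      = ∑ σ : Equiv.Perm (Fin (s' + 1)), (Equiv.Perm.sign σ : ℤ) •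
        ∏ t : Fin (s' + 1), Dplus (fun i j => φ (c i j))
          (List.range' 1 (u1 + t.1) ++ [a (σ t)]) := by
  rw [map_sum]
  refine Finset.sum_congr rfl fun σ _ => ?_
  rw [map_zsmul]
  congr 1
  rw [map_prod]
  exact Finset.prod_congr rfl fun t _ => (map_Dplus φ c _).symm

lemma map_rhs (φ : R →+* S) (c : ℕ → ℕ → R) (u1 s' : ℕ) (a : Fin (s' + 1) → ℕ) :
    φ (Dplus c (List.range' 1 u1 ++ List.ofFn a) * ∏ t : Fin s', pmin c (u1 + t.1 + 1))
      = Dplus (fun i j => φ (c i j)) (List.range' 1 u1 ++ List.ofFn a)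
          * ∏ t : Fin s', pmin (fun i j => φ (c i j)) (u1 + t.1 + 1) := by
  rw [map_mul, map_prod, ← map_Dplus]
  congr 1
  exact Finset.prod_congr rfl fun t _ => (map_Dplus φ c _).symm

end Transfer

lemma core_ring (c : ℕ → ℕ → R) (u1 s' : ℕ) (a : Fin (s' + 1) → ℕ) :
    ∑ σ : Equiv.Perm (Fin (s' + 1)), (Equiv.Perm.sign σ : ℤ) •
        ∏ t : Fin (s' + 1), Dplus c (List.range' 1 (u1 + t.1) ++ [a (σ t)])
      = Dplus c (List.range' 1 u1 ++ List.ofFn a)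
          * ∏ t : Fin s', pmin c (u1 + t.1 + 1) := by
  classical
  let P := MvPolynomial (ℕ × ℕ) ℤ
  let c0 : ℕ → ℕ → P := fun i j => MvPolynomial.X (i, j)
  let K := FractionRing P
  let ι : P →+* K := algebraMap P K
  have hιinj : Function.Injective ι := IsFractionRing.injective P K
  -- nonvanishing of the generic determinant
  have hq : (bM (fun i j => ι (c0 i j)) u1 (s' + 1)).det ≠ 0 := by
    rw [map_bM, ← RingHom.map_det]
    intro h0
    have h2 : (bM c0 u1 (s' + 1)).det = 0 := hιinj (by rw [h0, map_zero])
    have h3 := congrArg (MvPolynomial.eval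
      (fun p : ℕ × ℕ => if p.1 = p.2 then (1 : ℤ) else 0)) h2
    rw [map_zero] at h3
    rw [show (MvPolynomial.eval (fun p : ℕ × ℕ => if p.1 = p.2 then (1 : ℤ) else 0))
          ((bM c0 u1 (s' + 1)).det)
        = (bM (fun i j => (MvPolynomial.eval
            (fun p : ℕ × ℕ => if p.1 = p.2 then (1 : ℤ) else 0)) (c0 i j)) u1 (s' + 1)).det
      from by rw [map_bM, ← RingHom.map_det]] at h3
    have h5 : (bM (fun i j => (MvPolynomial.eval
        (fun p : ℕ × ℕ => if p.1 = p.2 then (1 : ℤ) else 0)) (c0 i j)) u1 (s' + 1))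
        = (1 : Matrix (Fin (u1 + (s' + 1))) (Fin (u1 + (s' + 1))) ℤ) := by
      ext i j
      simp only [bM, Matrix.of_apply, Matrix.one_apply, c0, MvPolynomial.eval_X]
      split_ifs <;> simp_all [Fin.ext_iff] <;> omega
    rw [h5, Matrix.det_one] at h3
    exact one_ne_zero h3
  have hK := core_field (fun i j => ι (c0 i j)) u1 s' hq a
  have hgen : ∑ σ : Equiv.Perm (Fin (s' + 1)), (Equiv.Perm.sign σ : ℤ) •
        ∏ t : Fin (s' + 1), Dplus c0 (List.range' 1 (u1 + t.1) ++ [a (σ t)])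
      = Dplus c0 (List.range' 1 u1 ++ List.ofFn a)
          * ∏ t : Fin s', pmin c0 (u1 + t.1 + 1) := by
    apply hιinj
    rw [map_lhs, map_rhs]
    exact hK
  let φ : P →+* R := MvPolynomial.eval₂Hom (Int.castRingHom R) (fun p : ℕ × ℕ => c p.1 p.2)
  have hφc : (fun i j => φ (c0 i j)) = c := by
    funext i j
    exact MvPolynomial.eval₂Hom_X' _ _ _
  have hfinal := congrArg φ hgen
  rw [map_lhs, map_rhs, hφc] at hfinal
  exact hfinal

end S6


/-- `Σ_σ sgn(σ) ∏_{t=1}^{s} D⁺(1,…,u+t−2,σ(a)_t)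
  = D⁺(1,…,u−1,a₁,…,a_s) · ∏_{t=1}^{s−1} D⁺(1,…,u+t−1)`,
the sum over all permutations of the tuple `(a₁,…,a_s)`. -/
theorem statement6 {R : Type*} [CommRing R] (c : ℕ → ℕ → R) (m u s : ℕ)
    (hu : 1 ≤ u) (hs : 2 ≤ s) (husm : u + s - 1 ≤ m)
    (a : Fin s → ℕ) (ha : ∀ t, 1 ≤ a t ∧ a t ≤ m) :
    ∑ σ : Equiv.Perm (Fin s), (Equiv.Perm.sign σ : ℤ) •
        ∏ t : Fin s, Dplus c (List.range' 1 (u + t.1 - 1) ++ [a (σ t)])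
      = Dplus c (List.range' 1 (u - 1) ++ List.ofFn a) *
          ∏ t ∈ Finset.Icc 1 (s - 1), Dplus c (List.range' 1 (u + t - 1)) := by
  obtain ⟨u1, rfl⟩ : ∃ u1, u = u1 + 1 := ⟨u - 1, by omega⟩
  obtain ⟨s', rfl⟩ : ∃ s', s = s' + 1 := ⟨s - 1, by omega⟩
  simp only [show ∀ k : ℕ, u1 + 1 + k - 1 = u1 + k from fun k => by omega,
    Nat.add_sub_cancel]
  refine (S6.core_ring c u1 s' a).trans ?_
  congr 1
  rw [Fin.prod_univ_eq_prod_range (fun t => S6.pmin c (u1 + t + 1)) s']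
  refine Finset.prod_nbij' (fun t => t + 1) (fun t => t - 1) ?_ ?_ ?_ ?_ ?_
  · intro x hx
    simp only [Finset.mem_range] at hx
    simp only [Finset.mem_Icc]
    omega
  · intro x hx
    simp only [Finset.mem_Icc] at hx
    simp only [Finset.mem_range]
    omega
  · intro x _
    show x + 1 - 1 = x
    omega
  · intro x hx
    simp only [Finset.mem_Icc] at hx
    show x - 1 + 1 = x
    omega
  · intro x _
    rfl
end
end

section
/- Let 2 ≤ s ≤ n and let x₁,…,x_{s−1} and a₁,…,a_s be integers from the set {m+1,…,m+n}. Then Σ_{t=1}^{s} (−1)^{s−t} D⁻(x₁,…,x_{s−1},a_t) · D⁻(a₁,…,⟨a_t⟩,…,a_s) = D⁻(x₁,…,x_{s−1}) · D⁻(a₁,…,a_s). -/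
noncomputable section

lemma Dminus_eq {R : Type*} [CommRing R] (c : ℕ → ℕ → R) (m k : ℕ) (l : List ℕ)
    (h : l.length = k) (f : Fin k → ℕ)
    (hf : ∀ v : Fin k, l.get (Fin.cast h.symm v) = f v) :
    Dminus c m l = (Matrix.of fun u v : Fin k => c (m + u.1 + 1) (f v)).det := by
  subst h
  unfold Dminus
  congr 1
  ext u v
  have : Fin.cast (rfl : l.length = l.length).symm v = v := rfl
  simp only [Matrix.of_apply, ← hf v, this]

lemma sum_mul_det_updateColumn {R : Type*} [CommRing R] {k : ℕ}
    (M : Matrix (Fin k) (Fin k) R) (j : Fin k) (v : Fin k → Fin k → R) (w : Fin k → R) :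
    ∑ t, w t * (M.updateCol j (v t)).det
      = (M.updateCol j (fun u => ∑ t, w t * v t u)).det := by
  classical
  have key : ∀ s : Finset (Fin k),
      ∑ t ∈ s, w t * (M.updateCol j (v t)).det
        = (M.updateCol j (fun u => ∑ t ∈ s, w t * v t u)).det := by
    intro s
    induction s using Finset.induction_on with
    | empty =>
        simp only [Finset.sum_empty]
        exact (Matrix.det_eq_zero_of_column_eq_zero j (by simp)).symm
    | insert b s' hnot ih =>
        rw [Finset.sum_insert hnot]
        have hfun : (fun u => ∑ t ∈ insert b s', w t * v t u)
            = (w b • v b) + (fun u => ∑ t ∈ s', w t * v t u) := by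
          funext u
          simp [Finset.sum_insert hnot]
        rw [hfun, Matrix.det_updateCol_add, Matrix.det_updateCol_smul, ih]
  simpa using key Finset.univ

/-- `Σ_{t=1}^{s} (−1)^{s−t} D⁻(x₁,…,x_{s−1},a_t)·D⁻(a₁,…,⟨a_t⟩,…,a_s)
  = D⁻(x₁,…,x_{s−1})·D⁻(a₁,…,a_s)`. -/
theorem statement7 {R : Type*} [CommRing R] (c : ℕ → ℕ → R) (m n s : ℕ)
    (hs : 2 ≤ s) (hsn : s ≤ n)
    (x : Fin (s - 1) → ℕ) (a : Fin s → ℕ)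
    (hx : ∀ t, m + 1 ≤ x t ∧ x t ≤ m + n) (ha : ∀ t, m + 1 ≤ a t ∧ a t ≤ m + n) :
    ∑ t : Fin s, (-1 : R) ^ (s - 1 - t.1) *
        (Dminus c m (List.ofFn x ++ [a t]) * Dminus c m ((List.ofFn a).eraseIdx t.1))
      = Dminus c m (List.ofFn x) * Dminus c m (List.ofFn a) := by
  clear hx ha hsn
  obtain ⟨r, rfl⟩ : ∃ r, s = r + 1 := ⟨s - 1, by omega⟩
  clear hs
  -- the matrix of the `a` columns
  set A : Matrix (Fin (r + 1)) (Fin (r + 1)) R :=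
    Matrix.of (fun u t : Fin (r + 1) => c (m + u.1 + 1) (a t)) with hAdef
  -- the base matrix with `x` columns (last column dummy)
  set N : Matrix (Fin (r + 1)) (Fin (r + 1)) R :=
    Matrix.of (fun u v : Fin (r + 1) =>
      if h : v.1 < r then c (m + u.1 + 1) (x ⟨v.1, h⟩) else 0) with hNdef
  -- the x-matrix
  set X : Matrix (Fin r) (Fin r) R :=
    Matrix.of (fun u v : Fin r => c (m + u.1 + 1) (x ⟨v.1, by omega⟩))
    with hXdef
  have hDa : Dminus c m (List.ofFn a) = A.det := by
    apply Dminus_eq c m (r + 1) _ (by simp)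
    intro v
    simp only [List.get_eq_getElem, List.getElem_ofFn]
    exact congrArg a (Fin.ext rfl)
  have hDx : Dminus c m (List.ofFn x) = X.det := by
    apply Dminus_eq c m r _ (by simp)
    intro v
    simp only [List.get_eq_getElem, List.getElem_ofFn]
    exact congrArg x (Fin.ext rfl)
  have hD1 : ∀ t : Fin (r + 1), Dminus c m (List.ofFn x ++ [a t])
      = (N.updateCol (Fin.last r) (fun u => A u t)).det := by
    intro t
    rw [Dminus_eq c m (r + 1) _ (by simp)
      (fun v => if h : v.1 < r then x ⟨v.1, h⟩ else a t) ?_]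
    · congr 1
      ext u v
      rw [Matrix.updateCol_apply]
      by_cases hv : v = Fin.last r
      · subst hv
        simp [hAdef]
      · have hv' : v.1 < r := Fin.val_lt_last hv
        simp [hv, hv', hNdef]
    · intro v
      have hlen : (List.ofFn x).length = r := by simp
      simp only [List.get_eq_getElem, List.getElem_append, hlen, Fin.coe_cast]
      rcases Nat.lt_or_ge v.1 r with h | h
      · rw [dif_pos h, dif_pos h]
        try simp only [List.getElem_ofFn]
        try exact congrArg x (Fin.ext rfl)
      · have : ¬ v.1 < r := by omega
        rw [dif_neg this, dif_neg this]
        have hv : v.1 - r = 0 := by omega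
        simp [hv]
  have hD2 : ∀ t : Fin (r + 1), Dminus c m ((List.ofFn a).eraseIdx t.1)
      = (A.submatrix (Fin.last r).succAbove t.succAbove).det := by
    intro t
    rw [Dminus_eq c m r _ (by simp [List.length_eraseIdx]; exact Nat.lt_succ_iff.mp t.2)
      (fun v => a (t.succAbove v)) ?_]
    · congr 1
      ext u v
      simp [Fin.succAbove_last, hAdef]
    · intro v
      have hv1 : v.1 < (List.ofFn a).length := by simp
      simp only [List.get_eq_getElem, Fin.coe_cast]
      rw [List.getElem_eraseIdx]
      rcases Nat.lt_or_ge v.1 t.1 with h | h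
      · have hsa : t.succAbove v = v.castSucc := Fin.succAbove_of_castSucc_lt t v (by
          simpa [Fin.lt_def] using h)
        rw [dif_pos h, hsa]
        simp only [List.getElem_ofFn]
        exact congrArg a (Fin.ext rfl)
      · have hsa : t.succAbove v = v.succ := Fin.succAbove_of_le_castSucc t v (by
          simpa [Fin.le_def] using h)
        have h' : ¬ v.1 < t.1 := by omega
        rw [dif_neg h', hsa]
        simp only [List.getElem_ofFn]
        exact congrArg a (Fin.ext rfl)
  -- rewrite each summand
  have step1 : ∀ t : Fin (r + 1),
      (-1 : R) ^ (r + 1 - 1 - t.1) *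
        (Dminus c m (List.ofFn x ++ [a t]) * Dminus c m ((List.ofFn a).eraseIdx t.1))
      = (A.adjugate t (Fin.last r)) *
          (N.updateCol (Fin.last r) (fun u => A u t)).det := by
    intro t
    rw [hD1 t, hD2 t, Matrix.adjugate_fin_succ_eq_det_submatrix]
    have ht : t.1 ≤ r := Nat.lt_succ_iff.mp t.2
    have hsgn : (-1 : R) ^ (r + 1 - 1 - t.1) = (-1 : R) ^ (((Fin.last r) : ℕ) + t.1) := by
      have h1 : r + 1 - 1 - t.1 = r - t.1 := by omega
      rw [h1]
      have : ((Fin.last r : Fin (r + 1)) : ℕ) + t.1 = (r - t.1) + 2 * t.1 := by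
        simp [Fin.val_last]; omega
      rw [this, pow_add, pow_mul]
      simp
    rw [hsgn]
    ring
  rw [Finset.sum_congr rfl (fun t _ => step1 t)]
  rw [sum_mul_det_updateColumn]
  have hcol : (fun u => ∑ t, A.adjugate t (Fin.last r) * A u t)
      = A.det • (fun u : Fin (r + 1) => if u = Fin.last r then (1 : R) else 0) := by
    funext u
    have : ∑ t, A.adjugate t (Fin.last r) * A u t = (A * A.adjugate) u (Fin.last r) := by
      simp [Matrix.mul_apply, mul_comm]
    rw [this, Matrix.mul_adjugate]
    simp [Matrix.one_apply]
  rw [hcol, Matrix.det_updateCol_smul]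
  -- expand the remaining determinant along the last column
  have hexp : (N.updateCol (Fin.last r)
      (fun u : Fin (r + 1) => if u = Fin.last r then (1 : R) else 0)).det = X.det := by
    rw [Matrix.det_succ_column _ (Fin.last r)]
    rw [Finset.sum_eq_single (Fin.last r)]
    · have h1 : ((-1 : R)) ^ ((Fin.last r : Fin (r+1)).1 + (Fin.last r : Fin (r+1)).1) = 1 := by
        simp [Fin.val_last, ← two_mul, pow_mul]
      have hAentry : (N.updateCol (Fin.last r)
          (fun u : Fin (r+1) => if u = Fin.last r then (1:R) else 0))
          (Fin.last r) (Fin.last r) = 1 := by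
        simp [Matrix.updateCol_apply]
      rw [h1, hAentry, one_mul, one_mul]
      refine congrArg Matrix.det ?_
      ext u v
      have hne : (Fin.last r).succAbove v ≠ Fin.last r := by
        rw [Fin.succAbove_last]
        exact Fin.ne_of_lt (Fin.castSucc_lt_last v)
      have hne' : v.castSucc ≠ Fin.last r := Fin.ne_of_lt (Fin.castSucc_lt_last v)
      simp [Matrix.updateCol_apply, hne, hne', Fin.succAbove_last, hNdef, hXdef,
        Fin.is_lt v]
    · intro b _ hb
      have : (N.updateCol (Fin.last r)
          (fun u : Fin (r+1) => if u = Fin.last r then (1:R) else 0)) b (Fin.last r) = 0 := by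
        simp [Matrix.updateCol_apply, hb]
      rw [this]
      ring
    · simp
  rw [hexp, hDx, hDa]
  ring
end
end

section
/- Let T and T′ be semistandard skew tableaux of the same skew shape with entries in {m+1,…,m+n}. If C(T) = C(T′) then T = T′, and likewise if R(T) = R(T′) then T = T′. Consequently, the restrictions of the Clausen preorders ≺_c and ≺_r to the set of semistandard skew tableaux of a fixed skew shape are linear (total) orders, and so are their restrictions to the set of Littlewood–Richardson tableaux of a fixed skew shape. -/
noncomputable section

/-- A partition, written 1-based: `α i` is the length of row `i` for `i ≥ 1`
(we normalize `α 0 = 0`); it is weakly decreasing and eventually zero. -/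
def IsPartition (α : ℕ → ℕ) : Prop :=
  α 0 = 0 ∧ (∀ i j, 1 ≤ i → i ≤ j → α j ≤ α i) ∧ ∃ N, ∀ i, N ≤ i → α i = 0

/-- The set of cells of the skew diagram `α/β` (rows and columns 1-based):
`(i,j)` with `β i < j ≤ α i`. -/
def cellOf (α β : ℕ → ℕ) : Set (ℕ × ℕ) := {p | β p.1 < p.2 ∧ p.2 ≤ α p.1}

/-- Semistandard skew tableau: entries weakly increase along rows (left to right) and
strictly increase down columns. -/
def IsSSkew (α β : ℕ → ℕ) (T : ℕ × ℕ → ℕ) : Prop :=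
  (∀ i j j', (i, j) ∈ cellOf α β → (i, j') ∈ cellOf α β → j ≤ j' → T (i, j) ≤ T (i, j')) ∧
  (∀ i i' j, (i, j) ∈ cellOf α β → (i', j) ∈ cellOf α β → i < i' → T (i, j) < T (i', j))

/-- The Clausen column matrix: `(CmatC α β m T) j k` is the number of occurrences of
symbols from `{m+1,…,m+k}` in the columns of `T` of index `≥ j`. -/
def CmatC (α β : ℕ → ℕ) (m : ℕ) (T : ℕ × ℕ → ℕ) (j k : ℕ) : ℕ :=
  Set.ncard {p | p ∈ cellOf α β ∧ j ≤ p.2 ∧ m + 1 ≤ T p ∧ T p ≤ m + k}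

/-- The Clausen row matrix: `(CmatR α β m T) i k` is the number of occurrences of
symbols from `{m+1,…,m+k}` in the rows of `T` of index `≤ i`. -/
def CmatR (α β : ℕ → ℕ) (m : ℕ) (T : ℕ × ℕ → ℕ) (i k : ℕ) : ℕ :=
  Set.ncard {p | p ∈ cellOf α β ∧ p.1 ≤ i ∧ m + 1 ≤ T p ∧ T p ≤ m + k}

/-- `C(T) = C(T′)`. -/
def CeqC (α β : ℕ → ℕ) (m n : ℕ) (T T' : ℕ × ℕ → ℕ) : Prop :=
  ∀ j k, 1 ≤ j → 1 ≤ k → k ≤ n → CmatC α β m T j k = CmatC α β m T' j k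

/-- `R(T) = R(T′)`. -/
def ReqR (α β : ℕ → ℕ) (m n : ℕ) (T T' : ℕ × ℕ → ℕ) : Prop :=
  ∀ i k, 1 ≤ i → 1 ≤ k → k ≤ n → CmatR α β m T i k = CmatR α β m T' i k

/-- The Clausen column preorder `T ≺_c T′`. -/
def PrecC (α β : ℕ → ℕ) (m n : ℕ) (T T' : ℕ × ℕ → ℕ) : Prop :=
  CeqC α β m n T T' ∨
    ∃ j k, 1 ≤ j ∧ 1 ≤ k ∧ k ≤ n ∧
      (∀ i, j < i → ∀ l, 1 ≤ l → l ≤ n → CmatC α β m T i l = CmatC α β m T' i l) ∧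
      (∀ l, 1 ≤ l → l < k → CmatC α β m T j l = CmatC α β m T' j l) ∧
      CmatC α β m T j k < CmatC α β m T' j k

/-- The Clausen row preorder `T ≺_r T′`. -/
def PrecR (α β : ℕ → ℕ) (m n : ℕ) (T T' : ℕ × ℕ → ℕ) : Prop :=
  ReqR α β m n T T' ∨
    ∃ i k, 1 ≤ i ∧ 1 ≤ k ∧ k ≤ n ∧
      (∀ i', i' < i → ∀ l, 1 ≤ l → l ≤ n → CmatR α β m T i' l = CmatR α β m T' i' l) ∧
      (∀ l, 1 ≤ l → l < k → CmatR α β m T i l = CmatR α β m T' i l) ∧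
      CmatR α β m T i k < CmatR α β m T' i k

lemma cell_pos {α β : ℕ → ℕ} (hα : IsPartition α) (hβ : IsPartition β)
    {p : ℕ × ℕ} (hp : p ∈ cellOf α β) : 1 ≤ p.1 ∧ 1 ≤ p.2 := by
  obtain ⟨h1, h2⟩ := hp
  have hp2 : 1 ≤ p.2 := Nat.one_le_iff_ne_zero.mpr (by omega)
  refine ⟨?_, hp2⟩
  by_contra h
  have hp1 : p.1 = 0 := by omega
  rw [hp1, hα.1] at h2
  omega

lemma cell_finite {α β : ℕ → ℕ} (hα : IsPartition α) (hβ : IsPartition β) :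
    (cellOf α β).Finite := by
  obtain ⟨N, hN⟩ := hα.2.2
  apply Set.Finite.subset (Set.finite_Icc (0, 0) (N, α 1))
  rintro ⟨i, j⟩ hp
  obtain ⟨hi1, hj1⟩ := cell_pos hα hβ hp
  obtain ⟨h1, h2⟩ := hp
  simp only [Set.mem_Icc, Prod.le_def] at *
  constructor
  · exact ⟨Nat.zero_le _, Nat.zero_le _⟩
  constructor
  · by_contra h
    have := hN i (by omega)
    omega
  · exact le_trans h2 (hα.2.1 1 i (le_refl 1) hi1)

lemma cmatC_split {α β : ℕ → ℕ} {m : ℕ} {T : ℕ × ℕ → ℕ}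
    (hT : ∀ p ∈ cellOf α β, m + 1 ≤ T p)
    (hfin : (cellOf α β).Finite) (j k : ℕ) :
    CmatC α β m T j k =
      Set.ncard {p | p ∈ cellOf α β ∧ p.2 = j ∧ T p ≤ m + k} + CmatC α β m T (j + 1) k := by
  have hU : {p | p ∈ cellOf α β ∧ j ≤ p.2 ∧ m + 1 ≤ T p ∧ T p ≤ m + k}
      = {p | p ∈ cellOf α β ∧ p.2 = j ∧ T p ≤ m + k} ∪
        {p | p ∈ cellOf α β ∧ j + 1 ≤ p.2 ∧ m + 1 ≤ T p ∧ T p ≤ m + k} := by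
    ext p
    simp only [Set.mem_setOf_eq, Set.mem_union]
    constructor
    · rintro ⟨hc, hj, h1, h2⟩
      rcases eq_or_lt_of_le hj with h | h
      · exact Or.inl ⟨hc, h.symm, h2⟩
      · exact Or.inr ⟨hc, h, h1, h2⟩
    · rintro (⟨hc, hj, h2⟩ | ⟨hc, hj, h1, h2⟩)
      · exact ⟨hc, hj.ge, hT p hc, h2⟩
      · exact ⟨hc, by omega, h1, h2⟩
  rw [CmatC, CmatC, hU,
    Set.ncard_union_eq (by
      rw [Set.disjoint_left]
      rintro p ⟨_, hj, _⟩ ⟨_, hj', _⟩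
      omega) (hfin.subset fun p hp => hp.1) (hfin.subset fun p hp => hp.1)]

lemma cmatR_zero {α β : ℕ → ℕ} (hα : IsPartition α) (hβ : IsPartition β)
    {m : ℕ} {T : ℕ × ℕ → ℕ} (k : ℕ) : CmatR α β m T 0 k = 0 := by
  have : {p | p ∈ cellOf α β ∧ p.1 ≤ 0 ∧ m + 1 ≤ T p ∧ T p ≤ m + k} = ∅ := by
    ext p
    simp only [Set.mem_setOf_eq, Set.mem_empty_iff_false, iff_false]
    rintro ⟨hc, h0, _⟩
    have := (cell_pos hα hβ hc).1
    omega
  rw [CmatR, this, Set.ncard_empty]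

lemma cmatR_split {α β : ℕ → ℕ} (hα : IsPartition α) (hβ : IsPartition β)
    {m : ℕ} {T : ℕ × ℕ → ℕ}
    (hT : ∀ p ∈ cellOf α β, m + 1 ≤ T p)
    (hfin : (cellOf α β).Finite) (i k : ℕ) (hi : 1 ≤ i) :
    CmatR α β m T i k =
      Set.ncard {p | p ∈ cellOf α β ∧ p.1 = i ∧ T p ≤ m + k} + CmatR α β m T (i - 1) k := by
  have hU : {p | p ∈ cellOf α β ∧ p.1 ≤ i ∧ m + 1 ≤ T p ∧ T p ≤ m + k}
      = {p | p ∈ cellOf α β ∧ p.1 = i ∧ T p ≤ m + k} ∪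
        {p | p ∈ cellOf α β ∧ p.1 ≤ i - 1 ∧ m + 1 ≤ T p ∧ T p ≤ m + k} := by
    ext p
    simp only [Set.mem_setOf_eq, Set.mem_union]
    constructor
    · rintro ⟨hc, hj, h1, h2⟩
      rcases eq_or_lt_of_le hj with h | h
      · exact Or.inl ⟨hc, by omega, h2⟩
      · exact Or.inr ⟨hc, by omega, h1, h2⟩
    · rintro (⟨hc, hj, h2⟩ | ⟨hc, hj, h1, h2⟩)
      · exact ⟨hc, by omega, hT p hc, h2⟩
      · exact ⟨hc, by omega, h1, h2⟩
  rw [CmatR, CmatR, hU,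
    Set.ncard_union_eq (by
      rw [Set.disjoint_left]
      rintro p ⟨_, hj, _⟩ ⟨_, hj', _⟩
      omega) (hfin.subset fun p hp => hp.1) (hfin.subset fun p hp => hp.1)]

lemma colset_card_eq {α β : ℕ → ℕ} {m n : ℕ} {T T' : ℕ × ℕ → ℕ}
    (hT : ∀ p ∈ cellOf α β, m + 1 ≤ T p) (hT' : ∀ p ∈ cellOf α β, m + 1 ≤ T' p)
    (hfin : (cellOf α β).Finite) (hC : CeqC α β m n T T')
    {j k : ℕ} (hj : 1 ≤ j) (hk1 : 1 ≤ k) (hk2 : k ≤ n) :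
    Set.ncard {p | p ∈ cellOf α β ∧ p.2 = j ∧ T p ≤ m + k} =
      Set.ncard {p | p ∈ cellOf α β ∧ p.2 = j ∧ T' p ≤ m + k} := by
  have h1 := cmatC_split hT hfin j k
  have h2 := cmatC_split hT' hfin j k
  have e1 := hC j k hj hk1 hk2
  have e2 := hC (j + 1) k (by omega) hk1 hk2
  omega

lemma rowset_card_eq {α β : ℕ → ℕ} (hα : IsPartition α) (hβ : IsPartition β)
    {m n : ℕ} {T T' : ℕ × ℕ → ℕ}
    (hT : ∀ p ∈ cellOf α β, m + 1 ≤ T p) (hT' : ∀ p ∈ cellOf α β, m + 1 ≤ T' p)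
    (hfin : (cellOf α β).Finite) (hR : ReqR α β m n T T')
    {i k : ℕ} (hi : 1 ≤ i) (hk1 : 1 ≤ k) (hk2 : k ≤ n) :
    Set.ncard {p | p ∈ cellOf α β ∧ p.1 = i ∧ T p ≤ m + k} =
      Set.ncard {p | p ∈ cellOf α β ∧ p.1 = i ∧ T' p ≤ m + k} := by
  have h1 := cmatR_split hα hβ hT hfin i k hi
  have h2 := cmatR_split hα hβ hT' hfin i k hi
  have e1 := hR i k hi hk1 hk2
  have e2 : CmatR α β m T (i - 1) k = CmatR α β m T' (i - 1) k := by
    rcases Nat.eq_zero_or_pos (i - 1) with h | h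
    · rw [h, cmatR_zero hα hβ, cmatR_zero hα hβ]
    · exact hR (i - 1) k h hk1 hk2
  omega

lemma col_not_lt {α β : ℕ → ℕ} (hα : IsPartition α) (hβ : IsPartition β)
    {m n : ℕ} {T T' : ℕ × ℕ → ℕ}
    (hT : ∀ p ∈ cellOf α β, m + 1 ≤ T p ∧ T p ≤ m + n)
    (hT' : ∀ p ∈ cellOf α β, m + 1 ≤ T' p ∧ T' p ≤ m + n)
    (hss : IsSSkew α β T) (hss' : IsSSkew α β T')
    (hC : CeqC α β m n T T') :
    ∀ p ∈ cellOf α β, ¬ T p < T' p := by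
  have hfin := cell_finite hα hβ
  rintro ⟨i, j⟩ hp hlt
  obtain ⟨hTp1, hTp2⟩ := hT _ hp
  obtain ⟨hT'p1, hT'p2⟩ := hT' _ hp
  set k := T (i, j) - m with hk
  have hmk : m + k = T (i, j) := by omega
  have hj1 : 1 ≤ j := (cell_pos hα hβ hp).2
  have hcol := colset_card_eq (fun p hp => (hT p hp).1) (fun p hp => (hT' p hp).1)
    hfin hC hj1 (by omega) (by omega : k ≤ n)
  have hsub1 : {q : ℕ × ℕ | q ∈ cellOf α β ∧ q.2 = j ∧ q.1 ≤ i}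
      ⊆ {q | q ∈ cellOf α β ∧ q.2 = j ∧ T q ≤ m + k} := by
    rintro ⟨r, c⟩ ⟨hc, hcj, hri⟩
    obtain rfl : c = j := hcj
    refine ⟨hc, rfl, ?_⟩
    rcases lt_or_eq_of_le hri with h | h
    · have := hss.2 r i c hc hp h
      omega
    · obtain rfl : r = i := h
      omega
  have hsub2 : {q : ℕ × ℕ | q ∈ cellOf α β ∧ q.2 = j ∧ T' q ≤ m + k}
      ⊆ {q | q ∈ cellOf α β ∧ q.2 = j ∧ q.1 < i} := by
    rintro ⟨r, c⟩ ⟨hc, hcj, hle⟩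
    obtain rfl : c = j := hcj
    refine ⟨hc, rfl, ?_⟩
    by_contra h
    push_neg at h
    rcases eq_or_lt_of_le h with h | h
    · obtain rfl : i = r := h
      omega
    · have := hss'.2 i r c hp hc h
      omega
  have hssub : {q : ℕ × ℕ | q ∈ cellOf α β ∧ q.2 = j ∧ q.1 < i}
      ⊂ {q : ℕ × ℕ | q ∈ cellOf α β ∧ q.2 = j ∧ q.1 ≤ i} := by
    constructor
    · rintro q ⟨a, b, c⟩; exact ⟨a, b, c.le⟩
    · intro h
      have := h ⟨hp, rfl, le_refl i⟩
      exact absurd this.2.2 (lt_irrefl i)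
  have c1 : Set.ncard {q : ℕ × ℕ | q ∈ cellOf α β ∧ q.2 = j ∧ T' q ≤ m + k}
      ≤ Set.ncard {q : ℕ × ℕ | q ∈ cellOf α β ∧ q.2 = j ∧ q.1 < i} :=
    Set.ncard_le_ncard hsub2 (hfin.subset fun q hq => hq.1)
  have c2 : Set.ncard {q : ℕ × ℕ | q ∈ cellOf α β ∧ q.2 = j ∧ q.1 < i}
      < Set.ncard {q : ℕ × ℕ | q ∈ cellOf α β ∧ q.2 = j ∧ q.1 ≤ i} :=
    Set.ncard_lt_ncard hssub (hfin.subset fun q hq => hq.1)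
  have c3 : Set.ncard {q : ℕ × ℕ | q ∈ cellOf α β ∧ q.2 = j ∧ q.1 ≤ i}
      ≤ Set.ncard {q : ℕ × ℕ | q ∈ cellOf α β ∧ q.2 = j ∧ T q ≤ m + k} :=
    Set.ncard_le_ncard hsub1 (hfin.subset fun q hq => hq.1)
  omega

lemma row_not_lt {α β : ℕ → ℕ} (hα : IsPartition α) (hβ : IsPartition β)
    {m n : ℕ} {T T' : ℕ × ℕ → ℕ}
    (hT : ∀ p ∈ cellOf α β, m + 1 ≤ T p ∧ T p ≤ m + n)
    (hT' : ∀ p ∈ cellOf α β, m + 1 ≤ T' p ∧ T' p ≤ m + n)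
    (hss : IsSSkew α β T) (hss' : IsSSkew α β T')
    (hR : ReqR α β m n T T') :
    ∀ p ∈ cellOf α β, ¬ T p < T' p := by
  have hfin := cell_finite hα hβ
  rintro ⟨i, j⟩ hp hlt
  obtain ⟨hTp1, hTp2⟩ := hT _ hp
  obtain ⟨hT'p1, hT'p2⟩ := hT' _ hp
  set k := T (i, j) - m with hk
  have hmk : m + k = T (i, j) := by omega
  have hi1 : 1 ≤ i := (cell_pos hα hβ hp).1
  have hrow := rowset_card_eq hα hβ (fun p hp => (hT p hp).1) (fun p hp => (hT' p hp).1)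
    hfin hR hi1 (by omega) (by omega : k ≤ n)
  have hsub1 : {q : ℕ × ℕ | q ∈ cellOf α β ∧ q.1 = i ∧ q.2 ≤ j}
      ⊆ {q | q ∈ cellOf α β ∧ q.1 = i ∧ T q ≤ m + k} := by
    rintro ⟨r, c⟩ ⟨hc, hri, hcj⟩
    obtain rfl : r = i := hri
    refine ⟨hc, rfl, ?_⟩
    have := hss.1 r c j hc hp hcj
    omega
  have hsub2 : {q : ℕ × ℕ | q ∈ cellOf α β ∧ q.1 = i ∧ T' q ≤ m + k}
      ⊆ {q | q ∈ cellOf α β ∧ q.1 = i ∧ q.2 < j} := by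
    rintro ⟨r, c⟩ ⟨hc, hri, hle⟩
    obtain rfl : r = i := hri
    refine ⟨hc, rfl, ?_⟩
    by_contra h
    push_neg at h
    have := hss'.1 r j c hp hc h
    omega
  have hssub : {q : ℕ × ℕ | q ∈ cellOf α β ∧ q.1 = i ∧ q.2 < j}
      ⊂ {q : ℕ × ℕ | q ∈ cellOf α β ∧ q.1 = i ∧ q.2 ≤ j} := by
    constructor
    · rintro q ⟨a, b, c⟩; exact ⟨a, b, c.le⟩
    · intro h
      have := h ⟨hp, rfl, le_refl j⟩
      exact absurd this.2.2 (lt_irrefl j)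
  have c1 : Set.ncard {q : ℕ × ℕ | q ∈ cellOf α β ∧ q.1 = i ∧ T' q ≤ m + k}
      ≤ Set.ncard {q : ℕ × ℕ | q ∈ cellOf α β ∧ q.1 = i ∧ q.2 < j} :=
    Set.ncard_le_ncard hsub2 (hfin.subset fun q hq => hq.1)
  have c2 : Set.ncard {q : ℕ × ℕ | q ∈ cellOf α β ∧ q.1 = i ∧ q.2 < j}
      < Set.ncard {q : ℕ × ℕ | q ∈ cellOf α β ∧ q.1 = i ∧ q.2 ≤ j} :=
    Set.ncard_lt_ncard hssub (hfin.subset fun q hq => hq.1)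
  have c3 : Set.ncard {q : ℕ × ℕ | q ∈ cellOf α β ∧ q.1 = i ∧ q.2 ≤ j}
      ≤ Set.ncard {q : ℕ × ℕ | q ∈ cellOf α β ∧ q.1 = i ∧ T q ≤ m + k} :=
    Set.ncard_le_ncard hsub1 (hfin.subset fun q hq => hq.1)
  omega

lemma eq_of_CeqC {α β : ℕ → ℕ} (hα : IsPartition α) (hβ : IsPartition β)
    {m n : ℕ} {T T' : ℕ × ℕ → ℕ}
    (hT : ∀ p ∈ cellOf α β, m + 1 ≤ T p ∧ T p ≤ m + n)
    (hT' : ∀ p ∈ cellOf α β, m + 1 ≤ T' p ∧ T' p ≤ m + n)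
    (hss : IsSSkew α β T) (hss' : IsSSkew α β T')
    (hC : CeqC α β m n T T') :
    ∀ p ∈ cellOf α β, T p = T' p := by
  intro p hp
  have hC' : CeqC α β m n T' T := fun j k h1 h2 h3 => (hC j k h1 h2 h3).symm
  exact le_antisymm (not_lt.mp (col_not_lt hα hβ hT' hT hss' hss hC' p hp))
    (not_lt.mp (col_not_lt hα hβ hT hT' hss hss' hC p hp))

lemma eq_of_ReqR {α β : ℕ → ℕ} (hα : IsPartition α) (hβ : IsPartition β)
    {m n : ℕ} {T T' : ℕ × ℕ → ℕ}
    (hT : ∀ p ∈ cellOf α β, m + 1 ≤ T p ∧ T p ≤ m + n)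
    (hT' : ∀ p ∈ cellOf α β, m + 1 ≤ T' p ∧ T' p ≤ m + n)
    (hss : IsSSkew α β T) (hss' : IsSSkew α β T')
    (hR : ReqR α β m n T T') :
    ∀ p ∈ cellOf α β, T p = T' p := by
  intro p hp
  have hR' : ReqR α β m n T' T := fun i k h1 h2 h3 => (hR i k h1 h2 h3).symm
  exact le_antisymm (not_lt.mp (row_not_lt hα hβ hT' hT hss' hss hR' p hp))
    (not_lt.mp (row_not_lt hα hβ hT hT' hss hss' hR p hp))

lemma cmatC_large {α β : ℕ → ℕ} (hα : IsPartition α) (hβ : IsPartition β)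
    {m : ℕ} {T : ℕ × ℕ → ℕ} {j : ℕ} (hj : α 1 < j) (k : ℕ) :
    CmatC α β m T j k = 0 := by
  have : {p | p ∈ cellOf α β ∧ j ≤ p.2 ∧ m + 1 ≤ T p ∧ T p ≤ m + k} = ∅ := by
    ext p
    simp only [Set.mem_setOf_eq, Set.mem_empty_iff_false, iff_false]
    rintro ⟨hc, hjp, _⟩
    have h1 := (cell_pos hα hβ hc).1
    have h2 := hc.2
    have := hα.2.1 1 p.1 (le_refl 1) h1
    omega
  rw [CmatC, this, Set.ncard_empty]

lemma precC_total {α β : ℕ → ℕ} (hα : IsPartition α) (hβ : IsPartition β)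
    (m n : ℕ) (T T' : ℕ × ℕ → ℕ) :
    PrecC α β m n T T' ∨ PrecC α β m n T' T := by
  classical
  by_cases hceq : CeqC α β m n T T'
  · exact Or.inl (Or.inl hceq)
  have hne : ∃ j, ∃ k, (1 ≤ j ∧ 1 ≤ k ∧ k ≤ n) ∧
      CmatC α β m T j k ≠ CmatC α β m T' j k := by
    rw [CeqC] at hceq
    push_neg at hceq
    obtain ⟨j, k, h1, h2, h3, h4⟩ := hceq
    exact ⟨j, k, ⟨h1, h2, h3⟩, h4⟩
  set P : ℕ → Prop := fun j => ∃ k, 1 ≤ k ∧ k ≤ n ∧ CmatC α β m T j k ≠ CmatC α β m T' j k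
    with hP
  obtain ⟨j0, k0, ⟨hj01, hk01, hk0n⟩, hne0⟩ := hne
  have hPj0 : P j0 := ⟨k0, hk01, hk0n, hne0⟩
  have hj0le : j0 ≤ α 1 := by
    by_contra h
    push_neg at h
    rw [cmatC_large hα hβ h, cmatC_large hα hβ h] at hne0
    exact hne0 rfl
  set J := Nat.findGreatest P (α 1) with hJ
  have hPJ : P J := Nat.findGreatest_spec hj0le hPj0
  have hJ1 : 1 ≤ J := le_trans hj01 (Nat.le_findGreatest hj0le hPj0)
  have hmax : ∀ i, J < i → ∀ l, 1 ≤ l → l ≤ n →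
      CmatC α β m T i l = CmatC α β m T' i l := by
    intro i hi l hl1 hl2
    by_cases hile : i ≤ α 1
    · have hnPi : ¬ P i := Nat.findGreatest_is_greatest hi hile
      by_contra hne'
      exact hnPi ⟨l, hl1, hl2, hne'⟩
    · push_neg at hile
      rw [cmatC_large hα hβ hile, cmatC_large hα hβ hile]
  set Q : ℕ → Prop := fun k => 1 ≤ k ∧ k ≤ n ∧ CmatC α β m T J k ≠ CmatC α β m T' J k
    with hQdef
  have hQex : ∃ k, Q k := by
    obtain ⟨k, h1, h2, h3⟩ := hPJ
    exact ⟨k, h1, h2, h3⟩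
  set K := Nat.find hQex with hK
  obtain ⟨hK1, hKn, hKne⟩ : Q K := Nat.find_spec hQex
  have hmin : ∀ l, 1 ≤ l → l < K → CmatC α β m T J l = CmatC α β m T' J l := by
    intro l hl1 hlK
    have h0 : ¬ (1 ≤ l ∧ l ≤ n ∧ CmatC α β m T J l ≠ CmatC α β m T' J l) :=
      Nat.find_min hQex hlK
    push_neg at h0
    exact h0 hl1 (by omega)
  rcases lt_or_gt_of_ne hKne with h | h
  · exact Or.inl (Or.inr ⟨J, K, hJ1, hK1, hKn, hmax, hmin, h⟩)
  · refine Or.inr (Or.inr ⟨J, K, hJ1, hK1, hKn, ?_, ?_, h⟩)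
    · intro i hi l hl1 hl2
      exact (hmax i hi l hl1 hl2).symm
    · intro l hl1 hlK
      exact (hmin l hl1 hlK).symm

lemma precR_total {α β : ℕ → ℕ} (hα : IsPartition α) (hβ : IsPartition β)
    (m n : ℕ) (T T' : ℕ × ℕ → ℕ) :
    PrecR α β m n T T' ∨ PrecR α β m n T' T := by
  classical
  by_cases hreq : ReqR α β m n T T'
  · exact Or.inl (Or.inl hreq)
  set P : ℕ → Prop := fun i => ∃ k, 1 ≤ k ∧ k ≤ n ∧ CmatR α β m T i k ≠ CmatR α β m T' i k
    with hP
  have hPex : ∃ i, P i := by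
    rw [ReqR] at hreq
    push_neg at hreq
    obtain ⟨i, k, h1, h2, h3, h4⟩ := hreq
    exact ⟨i, k, h2, h3, h4⟩
  set I := Nat.find hPex with hI
  have hPI : P I := Nat.find_spec hPex
  have hI1 : 1 ≤ I := by
    rcases Nat.eq_zero_or_pos I with h | h
    · exfalso
      obtain ⟨k, _, _, hne⟩ := hPI
      rw [h, cmatR_zero hα hβ, cmatR_zero hα hβ] at hne
      exact hne rfl
    · exact h
  have hmin : ∀ i', i' < I → ∀ l, 1 ≤ l → l ≤ n →
      CmatR α β m T i' l = CmatR α β m T' i' l := by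
    intro i' hi' l hl1 hl2
    have h0 : ¬ ∃ k, 1 ≤ k ∧ k ≤ n ∧ CmatR α β m T i' k ≠ CmatR α β m T' i' k :=
      Nat.find_min hPex hi'
    push_neg at h0
    exact h0 l hl1 hl2
  set Q : ℕ → Prop := fun k => 1 ≤ k ∧ k ≤ n ∧ CmatR α β m T I k ≠ CmatR α β m T' I k
    with hQdef
  have hQex : ∃ k, Q k := hPI
  set K := Nat.find hQex with hK
  obtain ⟨hK1, hKn, hKne⟩ : Q K := Nat.find_spec hQex
  have hminK : ∀ l, 1 ≤ l → l < K → CmatR α β m T I l = CmatR α β m T' I l := by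
    intro l hl1 hlK
    have h0 : ¬ (1 ≤ l ∧ l ≤ n ∧ CmatR α β m T I l ≠ CmatR α β m T' I l) :=
      Nat.find_min hQex hlK
    push_neg at h0
    exact h0 hl1 (by omega)
  rcases lt_or_gt_of_ne hKne with h | h
  · exact Or.inl (Or.inr ⟨I, K, hI1, hK1, hKn, hmin, hminK, h⟩)
  · refine Or.inr (Or.inr ⟨I, K, hI1, hK1, hKn, ?_, ?_, h⟩)
    · intro i' hi' l hl1 hl2
      exact (hmin i' hi' l hl1 hl2).symm
    · intro l hl1 hlK
      exact (hminK l hl1 hlK).symm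

lemma precC_antisymm {α β : ℕ → ℕ} {m n : ℕ} {T T' : ℕ × ℕ → ℕ}
    (h1 : PrecC α β m n T T') (h2 : PrecC α β m n T' T) : CeqC α β m n T T' := by
  rcases h1 with h1 | ⟨j, k, hj1, hk1, hkn, hgt, hlt, hne⟩
  · exact h1
  rcases h2 with h2 | ⟨j', k', hj1', hk1', hkn', hgt', hlt', hne'⟩
  · exfalso
    have := h2 j k hj1 hk1 hkn
    omega
  exfalso
  rcases lt_trichotomy j j' with h | h | h
  · have := hgt j' h k' hk1' hkn'
    omega
  · subst h
    rcases lt_trichotomy k k' with h | h | h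
    · have := hlt' k hk1 h
      omega
    · subst h
      omega
    · have := hlt k' hk1' h
      omega
  · have := hgt' j h k hk1 hkn
    omega

lemma precR_antisymm {α β : ℕ → ℕ} {m n : ℕ} {T T' : ℕ × ℕ → ℕ}
    (h1 : PrecR α β m n T T') (h2 : PrecR α β m n T' T) : ReqR α β m n T T' := by
  rcases h1 with h1 | ⟨i, k, hi1, hk1, hkn, hgt, hlt, hne⟩
  · exact h1
  rcases h2 with h2 | ⟨i', k', hi1', hk1', hkn', hgt', hlt', hne'⟩
  · exfalso
    have := h2 i k hi1 hk1 hkn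
    omega
  exfalso
  rcases lt_trichotomy i i' with h | h | h
  · have := hgt' i h k hk1 hkn
    omega
  · subst h
    rcases lt_trichotomy k k' with h | h | h
    · have := hlt' k hk1 h
      omega
    · subst h
      omega
    · have := hlt k' hk1' h
      omega
  · have := hgt i' h k' hk1' hkn'
    omega

/-- for semistandard skew tableaux of the same shape with entries in
`{m+1,…,m+n}`, equality of Clausen column (resp. row) matrices implies equality of the
tableaux; consequently the restrictions of the Clausen preorders `≺_c` and `≺_r` to
semistandard (in particular, to Littlewood–Richardson) tableaux of a fixed shape are
linear orders (they are total, and antisymmetric up to equality of tableaux). -/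
theorem statement9 (α β : ℕ → ℕ) (m n : ℕ) (hn : 1 ≤ n)
    (hα : IsPartition α) (hβ : IsPartition β) (hβα : ∀ i, β i ≤ α i)
    (T T' : ℕ × ℕ → ℕ)
    (hT : ∀ p ∈ cellOf α β, m + 1 ≤ T p ∧ T p ≤ m + n)
    (hT' : ∀ p ∈ cellOf α β, m + 1 ≤ T' p ∧ T' p ≤ m + n)
    (hss : IsSSkew α β T) (hss' : IsSSkew α β T') :
    (CeqC α β m n T T' → ∀ p ∈ cellOf α β, T p = T' p) ∧
      (ReqR α β m n T T' → ∀ p ∈ cellOf α β, T p = T' p) ∧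
      (PrecC α β m n T T' ∨ PrecC α β m n T' T) ∧
      (PrecR α β m n T T' ∨ PrecR α β m n T' T) ∧
      (PrecC α β m n T T' → PrecC α β m n T' T → ∀ p ∈ cellOf α β, T p = T' p) ∧
      (PrecR α β m n T T' → PrecR α β m n T' T → ∀ p ∈ cellOf α β, T p = T' p) := by
  refine ⟨?_, ?_, ?_, ?_, ?_, ?_⟩
  · exact eq_of_CeqC hα hβ hT hT' hss hss'
  · exact eq_of_ReqR hα hβ hT hT' hss hss'
  · exact precC_total hα hβ m n T T'
  · exact precR_total hα hβ m n T T'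
  · intro h1 h2
    exact eq_of_CeqC hα hβ hT hT' hss hss' (precC_antisymm h1 h2)
  · intro h1 h2
    exact eq_of_ReqR hα hβ hT hT' hss hss' (precR_antisymm h1 h2)
end
end

section
/- Assume T⁺ is semistandard and shifted Yamanouchi. Let j₁ < j₂ and l be such that the cells (j₁,l) and (j₂,l) both belong to the skew diagram [ν/ω] (i.e. ω_{j₁} < l ≤ ν_{j₁} and ω_{j₂} < l ≤ ν_{j₂}). If the (l − ω_{j₁})-th occurrence of the symbol m+j₁ in w(T⁺) lies in row k₁ of T⁺ and the (l − ω_{j₂})-th occurrence of the symbol m+j₂ in w(T⁺) lies in row k₂ of T⁺, then k₁ < k₂. -/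
noncomputable section

/-- The conjugate partition (1-based): `(conjP α) j = #{i ≥ 1 | α i ≥ j}` for `j ≥ 1`. -/
def conjP (α : ℕ → ℕ) (j : ℕ) : ℕ := Set.ncard {i : ℕ | 1 ≤ i ∧ 1 ≤ j ∧ j ≤ α i}

/-- Anti-semistandard skew tableau: entries strictly decrease along rows (left to right)
and weakly decrease down columns. -/
def IsAntiSSkew (α β : ℕ → ℕ) (T : ℕ × ℕ → ℕ) : Prop :=
  (∀ i j j', (i, j) ∈ cellOf α β → (i, j') ∈ cellOf α β → j < j' → T (i, j') < T (i, j)) ∧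
  (∀ i i' j, (i, j) ∈ cellOf α β → (i', j) ∈ cellOf α β → i ≤ i' → T (i', j) ≤ T (i, j))

/-- `wle p q` : cell `p` comes weakly before cell `q` in the reading order of the reading
word (rows top to bottom, inside each row right to left). -/
def wle (p q : ℕ × ℕ) : Prop := p.1 < q.1 ∨ (p.1 = q.1 ∧ q.2 ≤ p.2)

/-- Number of occurrences of the symbol `v` among the cells weakly before `x` in the
reading word of `T` (so "the `j`-th occurrence of `v` in `w(T)` is at the cell `x`" reads
`x ∈ cellOf α β ∧ T x = v ∧ occBefore α β T v x = j`). -/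
def occBefore (α β : ℕ → ℕ) (T : ℕ × ℕ → ℕ) (v : ℕ) (x : ℕ × ℕ) : ℕ :=
  Set.ncard {p | p ∈ cellOf α β ∧ wle p x ∧ T p = v}

/-- Total number of occurrences of the symbol `v` in the skew tableau `T`. -/
def occCount (α β : ℕ → ℕ) (T : ℕ × ℕ → ℕ) (v : ℕ) : ℕ :=
  Set.ncard {p | p ∈ cellOf α β ∧ T p = v}

/-- The reading word of `T` is a lattice word for the symbols `base, base+1, …` :
in every initial segment, `v+1` occurs at most as often as `v`, for every `v ≥ base`. -/
def IsLatticeFrom (α β : ℕ → ℕ) (T : ℕ × ℕ → ℕ) (base : ℕ) : Prop :=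
  ∀ x ∈ cellOf α β, ∀ v, base ≤ v → occBefore α β T (v + 1) x ≤ occBefore α β T v x

/-- `T` (with symbols `m+1, m+2, …`) is shifted Yamanouchi with respect to the shift `ω`:
for every initial segment `w′` of the reading word and every `i ≥ 1`,
`ω i + a_i(w′) ≥ ω (i+1) + a_{i+1}(w′)`. -/
def ShiftedYam (α β : ℕ → ℕ) (m : ℕ) (ω : ℕ → ℕ) (T : ℕ × ℕ → ℕ) : Prop :=
  ∀ x ∈ cellOf α β, ∀ i, 1 ≤ i →
    ω (i + 1) + occBefore α β T (m + i + 1) x ≤ ω i + occBefore α β T (m + i) x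

/-- `Tm = Rp(Tp)` : if the `j`-th occurrence of the symbol `m+i` in the reading word of
`Tp` lies in column `c` of `Tp`, then the entry of `Tm` at the cell `(i, ω i + j)` is `c`. -/
def IsRp (α β : ℕ → ℕ) (m : ℕ) (ω : ℕ → ℕ) (Tp Tm : ℕ × ℕ → ℕ) : Prop :=
  ∀ x ∈ cellOf α β, ∀ i, 1 ≤ i → Tp x = m + i →
    Tm (i, ω i + occBefore α β Tp (m + i) x) = x.2

/-- `λ⁺` : the first `m` rows of `λ`. -/
def lamPlus (m : ℕ) (la : ℕ → ℕ) : ℕ → ℕ := fun i => if i ≤ m then la i else 0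

/-- `λ⁻` : the conjugate of the partition `(λ_{m+1}, λ_{m+2}, …)`. -/
def lamMinus (m : ℕ) (la : ℕ → ℕ) : ℕ → ℕ :=
  conjP (fun i => if 1 ≤ i then la (m + i) else 0)

lemma wle_refl' (p : ℕ × ℕ) : wle p p := by unfold wle; omega

lemma wle_trans' {p q r : ℕ × ℕ} (h1 : wle p q) (h2 : wle q r) : wle p r := by
  unfold wle at *; omega

lemma cellOf_finite' (m : ℕ) (la μ : ℕ → ℕ) (hla : IsPartition la) :
    (cellOf (conjP (lamPlus m la)) (conjP μ)).Finite := by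
  apply Set.Finite.subset (Set.Finite.prod (Set.finite_Icc 1 (la 1)) (Set.finite_Icc 1 m))
  rintro ⟨i, j⟩ ⟨h1, h2⟩
  simp only at h1 h2
  have hsub : {r : ℕ | 1 ≤ r ∧ 1 ≤ i ∧ i ≤ lamPlus m la r} ⊆ Set.Icc 1 m := by
    rintro r ⟨hr1, hi1, hir⟩
    refine ⟨hr1, ?_⟩
    by_contra h
    simp only [lamPlus, if_neg (by omega : ¬ r ≤ m)] at hir
    omega
  have hle : conjP (lamPlus m la) i ≤ m := by
    have := Set.ncard_le_ncard hsub (Set.finite_Icc 1 m)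
    rwa [show (Set.Icc 1 m).ncard = m by
      rw [← Finset.coe_Icc, Set.ncard_coe_finset, Nat.card_Icc]; omega] at this
  have hne : conjP (lamPlus m la) i ≠ 0 := by omega
  obtain ⟨r, hr1, hi1, hir⟩ := Set.nonempty_of_ncard_ne_zero hne
  have hlam : lamPlus m la r ≤ la r := by
    unfold lamPlus; split <;> omega
  have : la r ≤ la 1 := hla.2.1 1 r le_rfl hr1
  exact ⟨⟨hi1, by omega⟩, ⟨by omega, by omega⟩⟩

lemma occBefore_lt' {α β : ℕ → ℕ} (hC : (cellOf α β).Finite) (T : ℕ × ℕ → ℕ) (v : ℕ)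
    {x y : ℕ × ℕ} (hx : x ∈ cellOf α β) (hTx : T x = v) (hnle : ¬ wle x y) :
    occBefore α β T v y < occBefore α β T v x := by
  have hyx : wle y x := by unfold wle at hnle ⊢; omega
  have hsub : {p | p ∈ cellOf α β ∧ wle p y ∧ T p = v} ⊆
      {p | p ∈ cellOf α β ∧ wle p x ∧ T p = v} \ {x} := by
    rintro p ⟨hp, hpy, hpv⟩
    refine ⟨⟨hp, wle_trans' hpy hyx, hpv⟩, ?_⟩
    simp only [Set.mem_singleton_iff]
    rintro rfl
    exact hnle hpy
  have hfin : {p | p ∈ cellOf α β ∧ wle p x ∧ T p = v}.Finite :=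
    hC.subset (fun p hp => hp.1)
  have hmem : x ∈ {p | p ∈ cellOf α β ∧ wle p x ∧ T p = v} := ⟨hx, wle_refl' x, hTx⟩
  calc occBefore α β T v y
      ≤ ({p | p ∈ cellOf α β ∧ wle p x ∧ T p = v} \ {x}).ncard :=
        Set.ncard_le_ncard hsub hfin.diff
    _ < occBefore α β T v x := Set.ncard_diff_singleton_lt_of_mem hmem hfin


/-- if `T⁺` is semistandard and shifted Yamanouchi, and the cells
`(j₁,l)`, `(j₂,l)` (`j₁ < j₂`) both belong to `[ν/ω]`, then the `(l−ω_{j₁})`-th occurrence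
of `m+j₁` in `w(T⁺)` lies in a strictly higher row than the `(l−ω_{j₂})`-th occurrence of
`m+j₂`. -/
theorem statement10 (m n : ℕ) (hm : 1 ≤ m) (hn : 1 ≤ n) (la μ ν : ℕ → ℕ)
    (hla : IsPartition la) (hook : la (m + 1) ≤ n)
    (hμ : IsPartition μ) (hμl : ∀ i, μ i ≤ lamPlus m la i)
    (hν : IsPartition ν) (hνω : ∀ i, lamMinus m la i ≤ ν i)
    (Tp : ℕ × ℕ → ℕ)
    (hrange : ∀ p ∈ cellOf (conjP (lamPlus m la)) (conjP μ),
      m + 1 ≤ Tp p ∧ Tp p ≤ m + n)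
    (hcont : ∀ i, 1 ≤ i →
      occCount (conjP (lamPlus m la)) (conjP μ) Tp (m + i) = ν i - lamMinus m la i)
    (hss : IsSSkew (conjP (lamPlus m la)) (conjP μ) Tp)
    (hsy : ShiftedYam (conjP (lamPlus m la)) (conjP μ) m (lamMinus m la) Tp)
    (j₁ j₂ l : ℕ) (hj₁ : 1 ≤ j₁) (hjj : j₁ < j₂)
    (hc₁ : (j₁, l) ∈ cellOf ν (lamMinus m la))
    (hc₂ : (j₂, l) ∈ cellOf ν (lamMinus m la))
    (x₁ x₂ : ℕ × ℕ)
    (hx₁ : x₁ ∈ cellOf (conjP (lamPlus m la)) (conjP μ))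
    (hx₂ : x₂ ∈ cellOf (conjP (lamPlus m la)) (conjP μ))
    (hT₁ : Tp x₁ = m + j₁) (hT₂ : Tp x₂ = m + j₂)
    (ho₁ : occBefore (conjP (lamPlus m la)) (conjP μ) Tp (m + j₁) x₁ = l - lamMinus m la j₁)
    (ho₂ : occBefore (conjP (lamPlus m la)) (conjP μ) Tp (m + j₂) x₂ = l - lamMinus m la j₂) :
    x₁.1 < x₂.1 := by
  have hCfin := cellOf_finite' m la μ hla
  have hchain : ∀ d, lamMinus m la (j₁ + d) +
      occBefore (conjP (lamPlus m la)) (conjP μ) Tp (m + (j₁ + d)) x₂ ≤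
      lamMinus m la j₁ + occBefore (conjP (lamPlus m la)) (conjP μ) Tp (m + j₁) x₂ := by
    intro d
    induction d with
    | zero => simp
    | succ d ih => exact le_trans (hsy x₂ hx₂ (j₁ + d) (by omega)) ih
  obtain ⟨d, hd⟩ : ∃ d, j₂ = j₁ + d := ⟨j₂ - j₁, by omega⟩
  subst hd
  have hw1 : lamMinus m la j₁ < l := hc₁.1
  have hw2 : lamMinus m la (j₁ + d) < l := hc₂.1
  have h2 := hchain d
  have hge : l - lamMinus m la j₁ ≤
      occBefore (conjP (lamPlus m la)) (conjP μ) Tp (m + j₁) x₂ := by omega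
  have hwle : wle x₁ x₂ := by
    by_contra hn
    have := occBefore_lt' hCfin Tp (m + j₁) hx₁ hT₁ hn
    omega
  rcases hwle with h | ⟨heq, hle⟩
  · exact h
  · exfalso
    have hx2eq : ((x₁.1, x₂.2) : ℕ × ℕ) = x₂ := by rw [heq]
    have hmem2 : ((x₁.1, x₂.2) : ℕ × ℕ) ∈ cellOf (conjP (lamPlus m la)) (conjP μ) := by
      rw [hx2eq]; exact hx₂
    have hmono := hss.1 x₁.1 x₂.2 x₁.2 hmem2 hx₁ hle
    rw [hx2eq] at hmono
    have : Tp x₂ ≤ Tp x₁ := hmono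
    omega
end
end

section
/- If λ⁺_m ≥ n and T⁺ is semistandard, then T is semistandard. -/
noncomputable section

lemma conjP_le_iff {al : ℕ → ℕ} (hal : IsPartition al) {i j : ℕ} (hi : 1 ≤ i) (hj : 1 ≤ j) :
    j ≤ conjP al i ↔ i ≤ al j := by
  obtain ⟨h0, hmono, N, hN⟩ := hal
  have hfin : {k : ℕ | 1 ≤ k ∧ 1 ≤ i ∧ i ≤ al k}.Finite := by
    apply Set.Finite.subset (Set.finite_Iio N)
    intro k hk
    simp only [Set.mem_setOf_eq] at hk
    simp only [Set.mem_Iio]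
    by_contra h
    push_neg at h
    have := hN k h
    omega
  constructor
  · intro h
    by_contra hc
    push_neg at hc
    have hsub : {k : ℕ | 1 ≤ k ∧ 1 ≤ i ∧ i ≤ al k} ⊆ ↑(Finset.Ico 1 j) := by
      intro k hk
      simp only [Set.mem_setOf_eq] at hk
      simp only [Finset.coe_Ico, Set.mem_Ico]
      refine ⟨hk.1, ?_⟩
      by_contra hc2
      push_neg at hc2
      have := hmono j k hj hc2
      omega
    have hle := Set.ncard_le_ncard hsub (Finset.Ico 1 j).finite_toSet
    rw [Set.ncard_coe_finset, Nat.card_Ico] at hle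
    unfold conjP at h
    omega
  · intro h
    have hsub : ↑(Finset.Icc 1 j) ⊆ {k : ℕ | 1 ≤ k ∧ 1 ≤ i ∧ i ≤ al k} := by
      intro k hk
      simp only [Finset.coe_Icc, Set.mem_Icc] at hk
      exact ⟨hk.1, hi, le_trans h (hmono k j hk.1 hk.2)⟩
    have hle := Set.ncard_le_ncard hsub hfin
    rw [Set.ncard_coe_finset, Nat.card_Icc] at hle
    unfold conjP
    omega

lemma conjP_zero (al : ℕ → ℕ) : conjP al 0 = 0 := by
  unfold conjP
  convert Set.ncard_empty ℕ using 2
  ext k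
  simp

lemma lamPlus_isPartition {m : ℕ} {la : ℕ → ℕ} (hla : IsPartition la) :
    IsPartition (lamPlus m la) := by
  obtain ⟨h0, hmono, N, hN⟩ := hla
  refine ⟨by simp [lamPlus, h0], ?_, N, ?_⟩
  · intro i j hi hij
    unfold lamPlus
    by_cases hj : j ≤ m
    · rw [if_pos hj, if_pos (le_trans hij hj)]
      exact hmono i j hi hij
    · rw [if_neg hj]
      exact Nat.zero_le _
  · intro i hi
    unfold lamPlus
    split <;> simp [hN i hi]

/-- if `λ⁺_m ≥ n` and `T⁺` (the restriction of `T` to columns `1,…,m`)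
is semistandard, then `T` is semistandard. -/
theorem statement13 (m n : ℕ) (hm : 1 ≤ m) (hn : 1 ≤ n) (la μ ν : ℕ → ℕ)
    (hla : IsPartition la) (hook : la (m + 1) ≤ n)
    (hμ : IsPartition μ) (hμl : ∀ i, μ i ≤ lamPlus m la i)
    (hν : IsPartition ν) (hνω : ∀ i, lamMinus m la i ≤ ν i)
    (hlam : n ≤ la m)
    (T : ℕ × ℕ → ℕ)
    (hrange : ∀ p ∈ cellOf (conjP la) (conjP μ), m + 1 ≤ T p ∧ T p ≤ m + n)
    (hcanon : ∀ p ∈ cellOf (conjP la) (conjP μ), m < p.2 → T p = m + p.1)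
    (hcont : ∀ i, 1 ≤ i → occCount (conjP la) (conjP μ) T (m + i) = ν i)
    (hssp : IsSSkew (conjP (lamPlus m la)) (conjP μ) T) :
    IsSSkew (conjP la) (conjP μ) T := by
  have hpos : ∀ p ∈ cellOf (conjP la) (conjP μ), 1 ≤ p.1 ∧ 1 ≤ p.2 := by
    rintro ⟨r, c⟩ ⟨h1, h2⟩
    constructor
    · by_contra h
      push_neg at h
      interval_cases r
      rw [conjP_zero] at h2
      omega
    · omega
  have hplus : IsPartition (lamPlus m la) := lamPlus_isPartition hla
  have toPlus : ∀ r c, (r, c) ∈ cellOf (conjP la) (conjP μ) → c ≤ m →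
      (r, c) ∈ cellOf (conjP (lamPlus m la)) (conjP μ) := by
    intro r c hcell hcm
    obtain ⟨hr1, hc1⟩ := hpos _ hcell
    refine ⟨hcell.1, ?_⟩
    rw [conjP_le_iff hplus hr1 hc1]
    unfold lamPlus
    rw [if_pos hcm]
    exact (conjP_le_iff hla hr1 hc1).mp hcell.2
  have cell_col : ∀ r c x, (r, c) ∈ cellOf (conjP la) (conjP μ) → r ≤ x → x ≤ la c →
      (x, c) ∈ cellOf (conjP la) (conjP μ) := by
    intro r c x hcell hrx hxla
    obtain ⟨hr1, hc1⟩ := hpos _ hcell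
    have hx1 : 1 ≤ x := le_trans hr1 hrx
    constructor
    · by_contra h
      push_neg at h
      have := (conjP_le_iff hμ hx1 hc1).mp h
      have : c ≤ conjP μ r := (conjP_le_iff hμ hr1 hc1).mpr (le_trans hrx this)
      have := hcell.1
      simp only at *
      omega
    · exact (conjP_le_iff hla hx1 hc1).mpr hxla
  have chain : ∀ r c k, (r, c) ∈ cellOf (conjP la) (conjP μ) → c ≤ m → r + k ≤ la c →
      T (r, c) + k ≤ T (r + k, c) := by
    intro r c k hcell hcm
    induction k with
    | zero => intro _; simp
    | succ k ih =>
      intro hk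
      have h1 := ih (by omega)
      have c1 := cell_col r c (r + k) hcell (by omega) (by omega)
      have c2 := cell_col r c (r + k + 1) hcell (by omega) (by omega)
      have := hssp.2 (r + k) (r + k + 1) c (toPlus _ _ c1 hcm) (toPlus _ _ c2 hcm) (by omega)
      rw [show r + (k + 1) = r + k + 1 by omega]
      omega
  have colbound : ∀ r c, (r, c) ∈ cellOf (conjP la) (conjP μ) → c ≤ m → T (r, c) ≤ m + r := by
    intro r c hcell hcm
    obtain ⟨hr1, hc1⟩ := hpos _ hcell
    have hrb : r ≤ la c := (conjP_le_iff hla hr1 hc1).mp hcell.2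
    have hnc : n ≤ la c := le_trans hlam (hla.2.1 c m hc1 hcm)
    have hch := chain r c (la c - r) hcell hcm (by omega)
    rw [show r + (la c - r) = la c by omega] at hch
    have hbot := (hrange (la c, c) (cell_col r c (la c) hcell hrb le_rfl)).2
    omega
  constructor
  · intro i j j' h h' hjj'
    by_cases hj' : j' ≤ m
    · exact hssp.1 i j j' (toPlus _ _ h (le_trans hjj' hj')) (toPlus _ _ h' hj') hjj'
    · push_neg at hj'
      rw [hcanon (i, j') h' hj']
      by_cases hj : j ≤ m
      · exact colbound i j h hj
      · rw [hcanon (i, j) h (by omega)]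
  · intro i i' j h h' hii'
    by_cases hj : j ≤ m
    · exact hssp.2 i i' j (toPlus _ _ h hj) (toPlus _ _ h' hj) hii'
    · push_neg at hj
      rw [hcanon (i, j) h hj, hcanon (i', j) h' hj]
      simpa using hii'
end
end
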